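/- arXiv:2007.02553 — 4 statements merged into one kernel-verified Lean document; each statement's English description precedes it below -/
import Mathlib

section
/- Let (Ω, F, P) be a probability space and let E ⊆ L^0(F, P; ℝ^d) be a linear subspace that is closed with respect to convergence in probability and stable in the sense that f, g ∈ E and A ∈ F imply f·1_A + g·1_{A^c} ∈ E. Then there exists an F-measurable map 𝔓 from Ω into the set of orthogonal projections of ℝ^d such that for every f ∈ L^0(F, P; ℝ^d): f ∈ E if and only if 𝔓f = f P-almost surely. -/
open MeasureTheory Filter Set
open scoped RealInnerProductSpace Topology ENNReal

section Auxiliary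

variable {Ω : Type*} [MeasurableSpace Ω]

/-- Orthogonal projection onto the line spanned by `v` (zero map if `v = 0`). -/
noncomputable def projLine {d : ℕ} (v : EuclideanSpace ℝ (Fin d)) :
    EuclideanSpace ℝ (Fin d) →L[ℝ] EuclideanSpace ℝ (Fin d) :=
  (‖v‖^2)⁻¹ • (innerSL ℝ v).smulRight v

lemma projLine_apply {d : ℕ} (v x : EuclideanSpace ℝ (Fin d)) :
    projLine v x = ((‖v‖^2)⁻¹ * ⟪v, x⟫) • v := by
  simp [projLine, mul_smul]

lemma projLine_zero {d : ℕ} (x : EuclideanSpace ℝ (Fin d)) :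
    projLine (0 : EuclideanSpace ℝ (Fin d)) x = 0 := by
  simp [projLine_apply]

lemma projLine_idem {d : ℕ} (v x : EuclideanSpace ℝ (Fin d)) :
    projLine v (projLine v x) = projLine v x := by
  rcases eq_or_ne v 0 with rfl | hv
  · simp [projLine_zero]
  · have hnorm : ‖v‖ ≠ 0 := norm_ne_zero_iff.mpr hv
    rw [projLine_apply, projLine_apply, real_inner_smul_right,
      real_inner_self_eq_norm_sq]
    congr 1
    field_simp

lemma projLine_orth {d : ℕ} (v w x : EuclideanSpace ℝ (Fin d)) (h : ⟪v, w⟫ = 0) :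
    projLine v (projLine w x) = 0 := by
  rw [projLine_apply, projLine_apply, real_inner_smul_right, h]
  simp

lemma projLine_symm {d : ℕ} (v x y : EuclideanSpace ℝ (Fin d)) :
    ⟪projLine v x, y⟫ = ⟪x, projLine v y⟫ := by
  rw [projLine_apply, projLine_apply, real_inner_smul_left, real_inner_smul_right,
    real_inner_comm x v]
  ring

lemma exists_maximizer {d : ℕ} (P : Measure Ω) [IsProbabilityMeasure P]
    (E' : Set (Ω → EuclideanSpace ℝ (Fin d)))
    (hmeas : ∀ f ∈ E', Measurable f)
    (hzero : (fun _ => (0 : EuclideanSpace ℝ (Fin d))) ∈ E')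
    (hstable : ∀ f ∈ E', ∀ g ∈ E', ∀ A : Set Ω, MeasurableSet A →
      A.indicator f + Aᶜ.indicator g ∈ E')
    (hclosed : ∀ (f : ℕ → Ω → EuclideanSpace ℝ (Fin d))
      (g : Ω → EuclideanSpace ℝ (Fin d)), (∀ n, f n ∈ E') → Measurable g →
      TendstoInMeasure P f atTop g → g ∈ E') :
    ∃ g ∈ E', ∀ f ∈ E', ∀ᵐ ω ∂P, f ω ≠ 0 → g ω ≠ 0 := by
  classical
  have hsupp_meas : ∀ f ∈ E', MeasurableSet {ω | f ω ≠ 0} := by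
    intro f hf
    exact (hmeas f hf (measurableSet_singleton 0)).compl
  set α : ℝ≥0∞ := ⨆ f ∈ E', P {ω | f ω ≠ 0} with hα
  have hα_le : ∀ f ∈ E', P {ω | f ω ≠ 0} ≤ α := by
    intro f hf
    exact le_biSup (fun f => P {ω | f ω ≠ 0}) hf
  have hα_ne_top : α ≠ ⊤ := by
    refine ne_top_of_le_ne_top (by simp : (1:ℝ≥0∞) ≠ ⊤) ?_
    exact iSup₂_le fun f hf => prob_le_one
  have hseq : ∀ n : ℕ, ∃ f ∈ E', α - ((n:ℝ≥0∞)+1)⁻¹ ≤ P {ω | f ω ≠ 0} := by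
    intro n
    rcases eq_or_ne α 0 with h0 | h0
    · exact ⟨_, hzero, by simp [h0, zero_tsub]⟩
    · have hlt : α - ((n:ℝ≥0∞)+1)⁻¹ < α :=
        ENNReal.sub_lt_self hα_ne_top h0 (by simp)
      rw [hα] at hlt
      rcases lt_iSup_iff.mp hlt with ⟨f, hf⟩
      rcases lt_iSup_iff.mp hf with ⟨hfE, hf'⟩
      exact ⟨f, hfE, hf'.le⟩
  choose F hFE hFP using hseq
  let h : ℕ → Ω → EuclideanSpace ℝ (Fin d) := fun n => Nat.rec (F 0)
    (fun n hn => {ω | hn ω = 0}.indicator (F (n+1)) + {ω | hn ω = 0}ᶜ.indicator hn) n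
  have hh_succ : ∀ n, h (n+1) =
      {ω | h n ω = 0}.indicator (F (n+1)) + {ω | h n ω = 0}ᶜ.indicator (h n) := fun n => rfl
  have hhE : ∀ n, h n ∈ E' := by
    intro n
    induction n with
    | zero => exact hFE 0
    | succ n ih =>
      rw [hh_succ]
      exact hstable _ (hFE (n+1)) _ ih _ ((hmeas _ ih) (measurableSet_singleton 0))
  have hval : ∀ n ω, (h n ω ≠ 0 → h (n+1) ω = h n ω) ∧ (h n ω = 0 → h (n+1) ω = F (n+1) ω) := by
    intro n ω
    have hrfl : h (n+1) ω
        = {ω | h n ω = 0}.indicator (F (n+1)) ω + {ω | h n ω = 0}ᶜ.indicator (h n) ω := rfl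
    constructor
    · intro hne
      rw [hrfl, Set.indicator_of_notMem (show ω ∉ {ω | h n ω = 0} from hne),
        Set.indicator_of_mem (show ω ∈ {ω | h n ω = 0}ᶜ from hne), zero_add]
    · intro he
      rw [hrfl, Set.indicator_of_mem (show ω ∈ {ω | h n ω = 0} from he),
        Set.indicator_of_notMem (show ω ∉ {ω | h n ω = 0}ᶜ from not_not_intro he), add_zero]
  have hconst : ∀ ω m n, m ≤ n → h m ω ≠ 0 → h n ω = h m ω := by
    intro ω m n hmn hne
    induction n with
    | zero =>
      have : m = 0 := Nat.le_zero.mp hmn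
      subst this; rfl
    | succ n ih =>
      rcases Nat.lt_or_ge m (n+1) with hlt | hge
      · have h1 := ih (Nat.lt_succ_iff.mp hlt)
        rw [(hval n ω).1 (by rw [h1]; exact hne), h1]
      · have : m = n+1 := le_antisymm hmn hge
        subst this; rfl
  have hsuppF : ∀ n, {ω | F n ω ≠ 0} ⊆ {ω | h n ω ≠ 0} := by
    intro n
    induction n with
    | zero => exact subset_rfl
    | succ n _ =>
      intro ω hω
      have hω' : F (n+1) ω ≠ 0 := hω
      show h (n+1) ω ≠ 0
      rcases Classical.em (h n ω = 0) with he | he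
      · rw [(hval n ω).2 he]; exact hω'
      · rw [(hval n ω).1 he]; exact he
  have htends : ∀ ω, ∃ l, Tendsto (fun n => h n ω) atTop (𝓝 l) := by
    intro ω
    rcases Classical.em (∃ m, h m ω ≠ 0) with hex | hex
    · rcases hex with ⟨m, hm⟩
      exact ⟨h m ω, tendsto_atTop_of_eventually_const (i₀ := m) fun n hn => hconst ω m n hn hm⟩
    · push_neg at hex
      refine ⟨0, ?_⟩
      have heq : (fun n => h n ω) = fun _ => 0 := funext hex
      rw [heq]
      exact tendsto_const_nhds
  set g : Ω → EuclideanSpace ℝ (Fin d) := fun ω => limUnder atTop (fun n => h n ω) with hg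
  have hg_tends : ∀ ω, Tendsto (fun n => h n ω) atTop (𝓝 (g ω)) :=
    fun ω => tendsto_nhds_limUnder (htends ω)
  have hg_meas : Measurable g :=
    measurable_of_tendsto_metrizable (fun n => hmeas _ (hhE n))
      (tendsto_pi_nhds.mpr hg_tends)
  have hgE : g ∈ E' := by
    refine hclosed h g hhE hg_meas ?_
    exact tendstoInMeasure_of_tendsto_ae (fun n => (hmeas _ (hhE n)).aestronglyMeasurable)
      (Eventually.of_forall hg_tends)
  have hg_supp : ∀ n, {ω | h n ω ≠ 0} ⊆ {ω | g ω ≠ 0} := by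
    intro n ω hω
    have hω : h n ω ≠ 0 := hω
    show g ω ≠ 0
    have heq : g ω = h n ω :=
      tendsto_nhds_unique (hg_tends ω)
        (tendsto_atTop_of_eventually_const (i₀ := n) fun k hk => hconst ω n k hk hω)
    rw [heq]; exact hω
  have hgP : α ≤ P {ω | g ω ≠ 0} := by
    refine ENNReal.le_of_forall_pos_le_add fun ε hε _ => ?_
    obtain ⟨n, hn⟩ := ENNReal.exists_inv_nat_lt
      (by exact_mod_cast hε.ne' : (ε:ℝ≥0∞) ≠ 0)
    have h1 : α - ((n:ℝ≥0∞)+1)⁻¹ ≤ P {ω | g ω ≠ 0} :=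
      (hFP n).trans (measure_mono ((hsuppF n).trans (hg_supp n)))
    have h2 : ((n:ℝ≥0∞)+1)⁻¹ ≤ (ε:ℝ≥0∞) :=
      le_trans (ENNReal.inv_le_inv.mpr le_self_add) hn.le
    calc α ≤ (α - ((n:ℝ≥0∞)+1)⁻¹) + ((n:ℝ≥0∞)+1)⁻¹ := le_tsub_add
    _ ≤ P {ω | g ω ≠ 0} + ε := add_le_add h1 h2
  refine ⟨g, hgE, fun f hf => ?_⟩
  set A : Set Ω := {ω | g ω = 0} with hA
  have hA_meas : MeasurableSet A := hg_meas (measurableSet_singleton 0)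
  set k := A.indicator f + Aᶜ.indicator g with hk
  have hkE : k ∈ E' := hstable f hf g hgE A hA_meas
  have hsub : {ω | g ω ≠ 0} ∪ ({ω | f ω ≠ 0} ∩ A) ⊆ {ω | k ω ≠ 0} := by
    intro ω hω
    have hkω : k ω = A.indicator f ω + Aᶜ.indicator g ω := rfl
    rcases hω with hω | ⟨hω1, hω2⟩
    · have hnA : ω ∉ A := hω
      simp only [mem_setOf_eq, hkω, Set.indicator_of_notMem hnA,
        Set.indicator_of_mem (Set.mem_compl hnA), zero_add]
      exact hω
    · simp only [mem_setOf_eq, hkω, Set.indicator_of_mem hω2,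
        Set.indicator_of_notMem (by simpa using hω2 : ω ∉ Aᶜ), add_zero]
      exact hω1
  have hdisj : Disjoint {ω | g ω ≠ 0} ({ω | f ω ≠ 0} ∩ A) :=
    Set.disjoint_left.mpr fun ω hω1 hω2 => hω1 hω2.2
  have hle : P {ω | g ω ≠ 0} + P ({ω | f ω ≠ 0} ∩ A) ≤ α := by
    rw [← measure_union hdisj ((hsupp_meas f hf).inter hA_meas)]
    exact (measure_mono hsub).trans (hα_le k hkE)
  have hPA : P ({ω | f ω ≠ 0} ∩ A) = 0 := by
    by_contra hne
    have hlt : α < P {ω | g ω ≠ 0} + P ({ω | f ω ≠ 0} ∩ A) :=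
      lt_of_le_of_lt hgP
        (ENNReal.lt_add_right (ne_top_of_le_ne_top hα_ne_top (hα_le g hgE)) hne)
    exact absurd hle (not_le.mpr hlt)
  have hset : {ω | ¬(f ω ≠ 0 → g ω ≠ 0)} = {ω | f ω ≠ 0} ∩ A := by
    ext ω
    simp only [mem_setOf_eq, mem_inter_iff, Classical.not_imp, not_not, hA, mem_setOf_eq]
  rw [ae_iff, hset]
  exact hPA

lemma smul_mem_of_measurable {d : ℕ} (P : Measure Ω) [IsProbabilityMeasure P]
    (E : Set (Ω → EuclideanSpace ℝ (Fin d)))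
    (hE_meas : ∀ f ∈ E, Measurable f)
    (hE_zero : (fun _ => (0 : EuclideanSpace ℝ (Fin d))) ∈ E)
    (hE_add : ∀ f ∈ E, ∀ g ∈ E, f + g ∈ E)
    (hE_smul : ∀ c : ℝ, ∀ f ∈ E, c • f ∈ E)
    (hE_closed : ∀ (f : ℕ → Ω → EuclideanSpace ℝ (Fin d))
      (g : Ω → EuclideanSpace ℝ (Fin d)), (∀ n, f n ∈ E) → Measurable g →
      TendstoInMeasure P f atTop g → g ∈ E)
    (hE_stable : ∀ f ∈ E, ∀ g ∈ E, ∀ A : Set Ω, MeasurableSet A →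
      A.indicator f + Aᶜ.indicator g ∈ E)
    (c : Ω → ℝ) (hc : Measurable c) (f : Ω → EuclideanSpace ℝ (Fin d)) (hf : f ∈ E) :
    (fun ω => c ω • f ω) ∈ E := by
  classical
  -- Step A: indicators
  have hind : ∀ g ∈ E, ∀ A : Set Ω, MeasurableSet A → A.indicator g ∈ E := by
    intro g hg A hA
    have h1 := hE_stable g hg _ hE_zero A hA
    have h2 : A.indicator g + Aᶜ.indicator (fun _ => (0 : EuclideanSpace ℝ (Fin d)))
        = A.indicator g := by
      funext ω
      simp [Set.indicator_apply]
    rwa [h2] at h1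
  -- Step B: simple functions
  have hsimple : ∀ s : SimpleFunc Ω ℝ, (fun ω => s ω • f ω) ∈ E := by
    intro s
    induction s using SimpleFunc.induction with
    | @const c' s' hs =>
      have heq : (fun ω => ((SimpleFunc.piecewise s' hs (SimpleFunc.const Ω c')
          (SimpleFunc.const Ω 0)) ω) • f ω) = s'.indicator (c' • f) := by
        funext ω
        by_cases hω : ω ∈ s' <;>
          simp [SimpleFunc.piecewise_apply, Set.indicator_apply, hω]
      rw [heq]
      exact hind _ (hE_smul c' f hf) s' hs
    | @add p q _ hp hq =>
      have heq : (fun ω => ((p + q) ω) • f ω)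
          = (fun ω => p ω • f ω) + (fun ω => q ω • f ω) := by
        funext ω
        simp [add_smul]
      rw [heq]
      exact hE_add _ hp _ hq
  -- Step C: general measurable c
  refine hE_closed (fun n ω => (SimpleFunc.approxOn c hc Set.univ 0 (mem_univ 0) n) ω • f ω)
    (fun ω => c ω • f ω) (fun n => hsimple _) (hc.smul (hE_meas f hf)) ?_
  refine tendstoInMeasure_of_tendsto_ae
    (fun n => ((SimpleFunc.measurable (SimpleFunc.approxOn c hc Set.univ 0 (mem_univ 0) n)).smul (hE_meas f hf)).aestronglyMeasurable) ?_
  refine Eventually.of_forall fun ω => ?_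
  have h1 : Tendsto (fun n => (SimpleFunc.approxOn c hc Set.univ 0 (mem_univ 0) n) ω)
      atTop (𝓝 (c ω)) :=
    SimpleFunc.tendsto_approxOn hc (mem_univ 0) (by simp)
  exact h1.smul tendsto_const_nhds

lemma exists_orth_sequence {d : ℕ} (P : Measure Ω) [IsProbabilityMeasure P]
    (E : Set (Ω → EuclideanSpace ℝ (Fin d)))
    (hE_meas : ∀ f ∈ E, Measurable f)
    (hE_zero : (fun _ => (0 : EuclideanSpace ℝ (Fin d))) ∈ E)
    (hE_closed : ∀ (f : ℕ → Ω → EuclideanSpace ℝ (Fin d))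
      (g : Ω → EuclideanSpace ℝ (Fin d)), (∀ n, f n ∈ E) → Measurable g →
      TendstoInMeasure P f atTop g → g ∈ E)
    (hE_stable : ∀ f ∈ E, ∀ g ∈ E, ∀ A : Set Ω, MeasurableSet A →
      A.indicator f + Aᶜ.indicator g ∈ E)
    (k : ℕ) :
    ∃ g : ℕ → Ω → EuclideanSpace ℝ (Fin d),
      (∀ i, i < k → g i ∈ E) ∧
      (∀ i j, i < k → j < k → i ≠ j → ∀ᵐ ω ∂P, ⟪g i ω, g j ω⟫ = 0) ∧
      (∀ j, j < k → ∀ f ∈ E, (∀ i, i < j → ∀ᵐ ω ∂P, ⟪f ω, g i ω⟫ = 0) →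
        ∀ᵐ ω ∂P, f ω ≠ 0 → g j ω ≠ 0) := by
  classical
  induction k with
  | zero =>
    exact ⟨fun _ _ => 0, fun i hi => absurd hi (Nat.not_lt_zero i),
      fun i j hi => absurd hi (Nat.not_lt_zero i),
      fun j hj => absurd hj (Nat.not_lt_zero j)⟩
  | succ k ih =>
    obtain ⟨g, hg_mem, hg_orth, hg_max⟩ := ih
    set E' : Set (Ω → EuclideanSpace ℝ (Fin d)) :=
      {f ∈ E | ∀ i, i < k → ∀ᵐ ω ∂P, ⟪f ω, g i ω⟫ = 0} with hE'
    have hE'_sub : E' ⊆ E := fun f hf => hf.1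
    have hE'_meas : ∀ f ∈ E', Measurable f := fun f hf => hE_meas f (hE'_sub hf)
    have hE'_zero : (fun _ => (0 : EuclideanSpace ℝ (Fin d))) ∈ E' := by
      refine ⟨hE_zero, fun i hi => ?_⟩
      exact Eventually.of_forall fun ω => inner_zero_left _
    have hE'_stable : ∀ f ∈ E', ∀ g'' ∈ E', ∀ A : Set Ω, MeasurableSet A →
        A.indicator f + Aᶜ.indicator g'' ∈ E' := by
      intro f hf g'' hg'' A hA
      refine ⟨hE_stable f hf.1 g'' hg''.1 A hA, fun i hi => ?_⟩
      filter_upwards [hf.2 i hi, hg''.2 i hi] with ω h1 h2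
      by_cases hω : ω ∈ A
      · simp only [Pi.add_apply, Set.indicator_of_mem hω,
          Set.indicator_of_notMem (show ω ∉ Aᶜ from fun hc => hc hω), add_zero]
        exact h1
      · simp only [Pi.add_apply, Set.indicator_of_notMem hω,
          Set.indicator_of_mem (Set.mem_compl hω), zero_add]
        exact h2
    have hE'_closed : ∀ (f : ℕ → Ω → EuclideanSpace ℝ (Fin d))
        (g'' : Ω → EuclideanSpace ℝ (Fin d)), (∀ n, f n ∈ E') → Measurable g'' →
        TendstoInMeasure P f atTop g'' → g'' ∈ E' := by
      intro f g'' hfE' hgm htend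
      refine ⟨hE_closed f g'' (fun n => (hfE' n).1) hgm htend, fun i hi => ?_⟩
      obtain ⟨ns, hns, hae⟩ := htend.exists_seq_tendsto_ae
      have hall : ∀ᵐ ω ∂P, ∀ n, ⟪f (ns n) ω, g i ω⟫ = 0 :=
        ae_all_iff.mpr fun n => (hfE' (ns n)).2 i hi
      filter_upwards [hae, hall] with ω hω hω2
      have hcont : Tendsto (fun n => ⟪f (ns n) ω, g i ω⟫) atTop (𝓝 ⟪g'' ω, g i ω⟫) :=
        Tendsto.inner hω tendsto_const_nhds
      have heq : (fun n => ⟪f (ns n) ω, g i ω⟫) = fun _ => (0:ℝ) := funext hω2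
      rw [heq] at hcont
      exact tendsto_nhds_unique hcont tendsto_const_nhds
    obtain ⟨gk, hgkE', hgk_max⟩ := exists_maximizer P E' hE'_meas hE'_zero hE'_stable hE'_closed
    refine ⟨Function.update g k gk, ?_, ?_, ?_⟩
    · intro i hi
      rcases Nat.lt_succ_iff_lt_or_eq.mp hi with hi | rfl
      · rw [Function.update_of_ne (Nat.ne_of_lt hi)]
        exact hg_mem i hi
      · rw [Function.update_self]
        exact hgkE'.1
    · intro i j hi hj hij
      rcases Nat.lt_succ_iff_lt_or_eq.mp hi with hi' | rfl
      · rcases Nat.lt_succ_iff_lt_or_eq.mp hj with hj' | rfl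
        · rw [Function.update_of_ne (Nat.ne_of_lt hi'), Function.update_of_ne (Nat.ne_of_lt hj')]
          exact hg_orth i j hi' hj' hij
        · rw [Function.update_of_ne (Nat.ne_of_lt hi'), Function.update_self]
          filter_upwards [hgkE'.2 i hi'] with ω hω
          rw [real_inner_comm]
          exact hω
      · rcases Nat.lt_succ_iff_lt_or_eq.mp hj with hj' | rfl
        · rw [Function.update_of_ne (Nat.ne_of_lt hj'), Function.update_self]
          exact hgkE'.2 j hj'
        · exact absurd rfl hij
    · intro j hj f hfE horth
      rcases Nat.lt_succ_iff_lt_or_eq.mp hj with hj' | rfl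
      · rw [Function.update_of_ne (Nat.ne_of_lt hj')]
        refine hg_max j hj' f hfE fun i hi => ?_
        have := horth i hi
        rwa [Function.update_of_ne (Nat.ne_of_lt (hi.trans hj'))] at this
      · rw [Function.update_self]
        refine hgk_max f ⟨hfE, fun i hi => ?_⟩
        have := horth i hi
        rwa [Function.update_of_ne (Nat.ne_of_lt hi)] at this

end Auxiliary

/-- **Measurable range projection (Lemma 6.2.1 of Delbaen–Schachermayer).**
Let `E ⊆ L⁰(F, P; ℝᵈ)` be a linear subspace, closed under convergence in probability and
stable under pasting along measurable sets.  Then there exists an `F`-measurable map `𝔓`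
from `Ω` into the orthogonal projections of `ℝᵈ` such that a measurable `f` belongs to `E`
if and only if `𝔓 f = f` almost surely. -/
theorem exists_measurable_projection_of_stable_subspace
    {Ω : Type*} [MeasurableSpace Ω] (P : Measure Ω) [IsProbabilityMeasure P]
    (d : ℕ)
    (E : Set (Ω → EuclideanSpace ℝ (Fin d)))
    (hE_meas : ∀ f ∈ E, Measurable f)
    (hE_ae : ∀ f ∈ E, ∀ g : Ω → EuclideanSpace ℝ (Fin d), Measurable g → f =ᵐ[P] g → g ∈ E)
    (hE_zero : (fun _ => (0 : EuclideanSpace ℝ (Fin d))) ∈ E)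
    (hE_add : ∀ f ∈ E, ∀ g ∈ E, f + g ∈ E)
    (hE_smul : ∀ c : ℝ, ∀ f ∈ E, c • f ∈ E)
    (hE_closed : ∀ (f : ℕ → Ω → EuclideanSpace ℝ (Fin d))
      (g : Ω → EuclideanSpace ℝ (Fin d)), (∀ n, f n ∈ E) → Measurable g →
      TendstoInMeasure P f atTop g → g ∈ E)
    (hE_stable : ∀ f ∈ E, ∀ g ∈ E, ∀ A : Set Ω, MeasurableSet A →
      A.indicator f + Aᶜ.indicator g ∈ E) :
    ∃ 𝔓 : Ω → EuclideanSpace ℝ (Fin d) →L[ℝ] EuclideanSpace ℝ (Fin d),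
      (∀ x, Measurable fun ω => 𝔓 ω x) ∧
      (∀ ω, (𝔓 ω).comp (𝔓 ω) = 𝔓 ω) ∧
      (∀ ω x y, ⟪𝔓 ω x, y⟫ = ⟪x, 𝔓 ω y⟫) ∧
      (∀ f : Ω → EuclideanSpace ℝ (Fin d), Measurable f →
        (f ∈ E ↔ ∀ᵐ ω ∂P, 𝔓 ω (f ω) = f ω)) := by
  classical
  obtain ⟨g, hg_mem, hg_orth, hg_max⟩ :=
    exists_orth_sequence P E hE_meas hE_zero hE_closed hE_stable d
  -- a.e. pairwise orthogonality, all indices at once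
  have hpair : ∀ᵐ ω ∂P, ∀ i j, i < d → j < d → i ≠ j → ⟪g i ω, g j ω⟫ = 0 := by
    rw [ae_all_iff]
    intro i
    rw [ae_all_iff]
    intro j
    by_cases hc : i < d ∧ j < d ∧ i ≠ j
    · filter_upwards [hg_orth i j hc.1 hc.2.1 hc.2.2] with ω hω
      exact fun _ _ _ => hω
    · exact Eventually.of_forall fun ω h1 h2 h3 => absurd ⟨h1, h2, h3⟩ hc
  -- Key degeneracy lemma
  have hkey : ∀ h ∈ E, (∀ i, i < d → ∀ᵐ ω ∂P, ⟪h ω, g i ω⟫ = 0) →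
      ∀ᵐ ω ∂P, h ω = 0 := by
    intro h hhE horth
    rcases Nat.eq_zero_or_pos d with rfl | hd
    · haveI : Subsingleton (EuclideanSpace ℝ (Fin 0)) :=
        ⟨fun a b => by ext i; exact i.elim0⟩
      exact Eventually.of_forall fun ω => Subsingleton.elim _ _
    · have hd'lt : d - 1 < d := Nat.sub_lt hd one_pos
      have hho : ∀ᵐ ω ∂P, ∀ i, i < d → ⟪h ω, g i ω⟫ = 0 := by
        rw [ae_all_iff]
        intro i
        by_cases hc : i < d
        · filter_upwards [horth i hc] with ω hω
          exact fun _ => hω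
        · exact Eventually.of_forall fun ω h1 => absurd h1 hc
      have hsupp : ∀ᵐ ω ∂P, h ω ≠ 0 → g (d-1) ω ≠ 0 :=
        hg_max (d-1) hd'lt h hhE fun i hi => horth i (hi.trans hd'lt)
      have hnest : ∀ᵐ ω ∂P, ∀ i, i < d - 1 → (g (d-1) ω ≠ 0 → g i ω ≠ 0) := by
        rw [ae_all_iff]
        intro i
        by_cases hc : i < d - 1
        · filter_upwards [hg_max i (hc.trans hd'lt) (g (d-1)) (hg_mem (d-1) hd'lt)
            (fun m hm => by
              filter_upwards [hg_orth (d-1) m hd'lt ((hm.trans hc).trans hd'lt)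
                (Nat.ne_of_gt (hm.trans hc))] with ω hω
              exact hω)] with ω hω
          exact fun _ => hω
        · exact Eventually.of_forall fun ω h1 => absurd h1 hc
      filter_upwards [hpair, hho, hsupp, hnest] with ω hpairω hhoω hsuppω hnestω
      by_contra hne
      have hgd : g (d-1) ω ≠ 0 := hsuppω hne
      have hgall : ∀ i, i < d → g i ω ≠ 0 := by
        intro i hi
        rcases Nat.lt_or_ge i (d-1) with hlt | hge
        · exact hnestω i hlt hgd
        · have : i = d - 1 := le_antisymm (Nat.le_sub_one_of_lt hi) hge
          rw [this]; exact hgd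
      -- build an orthonormal family of size d+1 in a d-dimensional space
      set v : Fin (d+1) → EuclideanSpace ℝ (Fin d) :=
        Fin.snoc (fun i : Fin d => (‖g i.val ω‖)⁻¹ • g i.val ω) ((‖h ω‖)⁻¹ • h ω) with hv
      have hON : Orthonormal ℝ v := by
        rw [orthonormal_iff_ite]
        intro i j
        refine Fin.lastCases ?_ ?_ i
        · refine Fin.lastCases ?_ ?_ j
          · simp only [hv, Fin.snoc_last, if_pos rfl]
            rw [real_inner_smul_left, real_inner_smul_right, real_inner_self_eq_norm_sq]
            have : ‖h ω‖ ≠ 0 := norm_ne_zero_iff.mpr hne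
            field_simp
            simp
          · intro j'
            have hne2 : Fin.last d ≠ j'.castSucc := (Fin.castSucc_lt_last j').ne'
            simp only [hv, Fin.snoc_last, Fin.snoc_castSucc, if_neg hne2]
            rw [real_inner_smul_left, real_inner_smul_right, hhoω j'.val j'.isLt]
            ring
        · intro i'
          refine Fin.lastCases ?_ ?_ j
          · have hne2 : i'.castSucc ≠ Fin.last d := (Fin.castSucc_lt_last i').ne
            simp only [hv, Fin.snoc_last, Fin.snoc_castSucc, if_neg hne2]
            have hcomm := hhoω i'.val i'.isLt
            rw [real_inner_comm] at hcomm
            rw [real_inner_smul_left, real_inner_smul_right, hcomm]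
            ring
          · intro j'
            by_cases hij : i' = j'
            · subst hij
              simp only [hv, Fin.snoc_castSucc, if_pos rfl]
              rw [real_inner_smul_left, real_inner_smul_right, real_inner_self_eq_norm_sq]
              have : ‖g i'.val ω‖ ≠ 0 := norm_ne_zero_iff.mpr (hgall i'.val i'.isLt)
              field_simp
              simp
            · have hne2 : i'.castSucc ≠ j'.castSucc := by
                simpa using hij
              simp only [hv, Fin.snoc_castSucc, if_neg hne2]
              rw [real_inner_smul_left, real_inner_smul_right,
                hpairω i'.val j'.val i'.isLt j'.isLt (Fin.val_injective.ne hij)]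
              ring
      have hcard := hON.linearIndependent.fintype_card_le_finrank
      rw [finrank_euclideanSpace] at hcard
      simp only [Fintype.card_fin] at hcard
      omega
  -- good set where everything is pointwise orthogonal
  set O : Set Ω := {ω | ∀ i j, i < d → j < d → i ≠ j → ⟪g i ω, g j ω⟫ = 0} with hO
  have hO_meas : MeasurableSet O := by
    have heq : O = ⋂ (i : ℕ), ⋂ (j : ℕ),
        {ω | i < d → j < d → i ≠ j → ⟪g i ω, g j ω⟫ = 0} := by
      ext ω
      simp only [hO, mem_setOf_eq, mem_iInter]
    rw [heq]
    refine MeasurableSet.iInter fun i => MeasurableSet.iInter fun j => ?_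
    by_cases hc : i < d ∧ j < d ∧ i ≠ j
    · have heq2 : {ω | i < d → j < d → i ≠ j → ⟪g i ω, g j ω⟫ = 0}
          = (fun ω => ⟪g i ω, g j ω⟫) ⁻¹' {0} := by
        ext ω
        simp only [mem_setOf_eq, mem_preimage, mem_singleton_iff]
        constructor
        · intro hw; exact hw hc.1 hc.2.1 hc.2.2
        · intro hw _ _ _; exact hw
      rw [heq2]
      exact (Measurable.inner (hE_meas _ (hg_mem i hc.1)) (hE_meas _ (hg_mem j hc.2.1)))
        (measurableSet_singleton 0)
    · have heq2 : {ω | i < d → j < d → i ≠ j → ⟪g i ω, g j ω⟫ = 0} = univ := by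
        ext ω
        simp only [mem_setOf_eq, mem_univ, iff_true]
        intro h1 h2 h3
        exact absurd ⟨h1, h2, h3⟩ hc
      rw [heq2]
      exact MeasurableSet.univ
  have hO_ae : ∀ᵐ ω ∂P, ω ∈ O := hpair
  set g' : ℕ → Ω → EuclideanSpace ℝ (Fin d) := fun i => O.indicator (g i) with hg'
  have hg'_meas : ∀ i, i < d → Measurable (g' i) :=
    fun i hi => (hE_meas _ (hg_mem i hi)).indicator hO_meas
  have hg'_ae : ∀ i, g' i =ᵐ[P] g i := by
    intro i
    filter_upwards [hO_ae] with ω hω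
    exact Set.indicator_of_mem hω _
  have hg'_orth : ∀ ω i j, i < d → j < d → i ≠ j → ⟪g' i ω, g' j ω⟫ = 0 := by
    intro ω i j hi hj hij
    by_cases hω : ω ∈ O
    · simp only [hg', Set.indicator_of_mem hω]
      exact hω i j hi hj hij
    · simp only [hg', Set.indicator_of_notMem hω]
      exact inner_zero_left _
  have hg'_memE : ∀ i, i < d → g' i ∈ E := by
    intro i hi
    exact hE_ae (g i) (hg_mem i hi) (g' i) (hg'_meas i hi) (hg'_ae i).symm
  -- the projection
  set 𝔓 : Ω → EuclideanSpace ℝ (Fin d) →L[ℝ] EuclideanSpace ℝ (Fin d) :=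
    fun ω => ∑ i ∈ Finset.range d, projLine (g' i ω) with h𝔓
  have h𝔓_apply : ∀ ω x, 𝔓 ω x
      = ∑ i ∈ Finset.range d, ((‖g' i ω‖^2)⁻¹ * ⟪g' i ω, x⟫) • g' i ω := by
    intro ω x
    rw [h𝔓, ContinuousLinearMap.sum_apply]
    exact Finset.sum_congr rfl fun i _ => projLine_apply _ _
  -- sum membership helper
  have hsum_mem : ∀ (s : Finset ℕ) (F : ℕ → Ω → EuclideanSpace ℝ (Fin d)),
      (∀ i ∈ s, F i ∈ E) → (fun ω => ∑ i ∈ s, F i ω) ∈ E := by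
    intro s
    induction s using Finset.cons_induction with
    | empty =>
      intro F _
      simpa using hE_zero
    | cons a s ha ih =>
      intro F hF
      have heq : (fun ω => ∑ i ∈ Finset.cons a s ha, F i ω)
          = F a + fun ω => ∑ i ∈ s, F i ω := by
        funext ω
        simp only [Finset.sum_cons, Pi.add_apply]
      rw [heq]
      exact hE_add _ (hF a (Finset.mem_cons_self a s)) _
        (ih F fun i hi => hF i (Finset.mem_cons_of_mem hi))
  -- projected function is in E
  have hS_mem : ∀ (f : Ω → EuclideanSpace ℝ (Fin d)), Measurable f →
      (fun ω => ∑ i ∈ Finset.range d, ((‖g' i ω‖^2)⁻¹ * ⟪g' i ω, f ω⟫) • g' i ω) ∈ E := by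
    intro f hf
    refine hsum_mem _ _ fun i hi => ?_
    have hi' : i < d := Finset.mem_range.mp hi
    have hcmeas : Measurable fun ω => (‖g' i ω‖^2)⁻¹ * ⟪g' i ω, f ω⟫ :=
      ((((hg'_meas i hi').norm).pow_const 2).inv).mul
        (Measurable.inner (hg'_meas i hi') hf)
    exact smul_mem_of_measurable P E hE_meas hE_zero hE_add hE_smul hE_closed hE_stable
      _ hcmeas _ (hg'_memE i hi')
  refine ⟨𝔓, ?_, ?_, ?_, ?_⟩
  · -- measurability
    intro x
    have heq : (fun ω => 𝔓 ω x)
        = fun ω => ∑ i ∈ Finset.range d, ((‖g' i ω‖^2)⁻¹ * ⟪g' i ω, x⟫) • g' i ω :=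
      funext fun ω => h𝔓_apply ω x
    rw [heq]
    refine Finset.measurable_sum _ fun i hi => ?_
    have hi' : i < d := Finset.mem_range.mp hi
    exact (((((hg'_meas i hi').norm).pow_const 2).inv).mul
      (Measurable.inner (hg'_meas i hi') measurable_const)).smul (hg'_meas i hi')
  · -- idempotent
    intro ω
    refine ContinuousLinearMap.ext fun x => ?_
    rw [ContinuousLinearMap.comp_apply]
    have hstep : ∀ i ∈ Finset.range d, projLine (g' i ω) (𝔓 ω x) = projLine (g' i ω) x := by
      intro i hi
      have hi' : i < d := Finset.mem_range.mp hi
      rw [h𝔓, ContinuousLinearMap.sum_apply, map_sum]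
      rw [Finset.sum_eq_single i]
      · exact projLine_idem _ _
      · intro j hj hji
        exact projLine_orth _ _ _
          (hg'_orth ω i j hi' (Finset.mem_range.mp hj) (Ne.symm hji))
      · intro habs
        exact absurd hi habs
    calc (𝔓 ω) ((𝔓 ω) x) = ∑ i ∈ Finset.range d, projLine (g' i ω) ((𝔓 ω) x) := by
          rw [h𝔓, ContinuousLinearMap.sum_apply]
    _ = ∑ i ∈ Finset.range d, projLine (g' i ω) x := Finset.sum_congr rfl hstep
    _ = (𝔓 ω) x := by rw [h𝔓, ContinuousLinearMap.sum_apply]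
  · -- symmetric
    intro ω x y
    rw [h𝔓]
    rw [ContinuousLinearMap.sum_apply, ContinuousLinearMap.sum_apply, sum_inner, inner_sum]
    exact Finset.sum_congr rfl fun i _ => projLine_symm _ _ _
  · -- membership characterization
    intro f hf
    set S : Ω → EuclideanSpace ℝ (Fin d) :=
      fun ω => ∑ i ∈ Finset.range d, ((‖g' i ω‖^2)⁻¹ * ⟪g' i ω, f ω⟫) • g' i ω with hSdef
    have hSE : S ∈ E := hS_mem f hf
    have hS_eq : ∀ ω, 𝔓 ω (f ω) = S ω := fun ω => h𝔓_apply ω (f ω)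
    constructor
    · intro hfE
      -- residual
      have hh_mem : (f + (-1:ℝ) • S) ∈ E := hE_add f hfE _ (hE_smul (-1) S hSE)
      have hh_val : ∀ ω, (f + (-1:ℝ) • S) ω = f ω - S ω := by
        intro ω
        simp [sub_eq_add_neg]
      have horthg' : ∀ i, i < d → ∀ ω, ⟪f ω - S ω, g' i ω⟫ = 0 := by
        intro i hi ω
        rw [inner_sub_left, hSdef]
        rw [sum_inner]
        rw [Finset.sum_eq_single i]
        · rw [real_inner_smul_left]
          rcases eq_or_ne (g' i ω) 0 with hz | hz
          · rw [hz]
            simp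
          · have hnz : ‖g' i ω‖ ≠ 0 := norm_ne_zero_iff.mpr hz
            rw [real_inner_self_eq_norm_sq, real_inner_comm (f ω) (g' i ω)]
            field_simp
            ring
        · intro j hj hji
          rw [real_inner_smul_left, hg'_orth ω j i (Finset.mem_range.mp hj) hi hji]
          ring
        · intro habs
          exact absurd (Finset.mem_range.mpr hi) habs
      have horth : ∀ i, i < d → ∀ᵐ ω ∂P, ⟪(f + (-1:ℝ) • S) ω, g i ω⟫ = 0 := by
        intro i hi
        filter_upwards [hg'_ae i] with ω hω
        rw [hh_val, ← hω]
        exact horthg' i hi ω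
      have hzero_ae := hkey _ hh_mem horth
      filter_upwards [hzero_ae] with ω hω
      rw [hS_eq ω]
      rw [hh_val ω] at hω
      exact (sub_eq_zero.mp hω).symm
    · intro hae
      refine hE_ae S hSE f hf ?_
      filter_upwards [hae] with ω hω
      rw [← hS_eq ω, hω]
end

section
/- Fix 1 ≤ t ≤ T, let Γ be a dense subset of Θ, and let (H_n)_{n∈ℕ} be a sequence of F_{t−1}-measurable ℝ^d-valued random variables in canonical form. Then: (i) (H_n)_{n∈ℕ} is a.s. bounded if and only if for every θ ∈ Γ the sequence (⟨H_n, ΔS^θ_t⟩)_{n∈ℕ} is a.s. bounded; (i') if in addition NRA holds, then (H_n)_{n∈ℕ} is a.s. bounded if and only if for every θ ∈ Γ the sequence of negative parts ((⟨H_n, ΔS^θ_t⟩)^−)_{n∈ℕ} is a.s. bounded. -/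
open MeasureTheory Filter Set
open scoped RealInnerProductSpace Topology

/-- The cumulative gain `(H · S^θ)_T = ∑_{t=1}^T ⟨H_t, ΔS^θ_t⟩` of a strategy `H`
against the price process `S^θ`. -/
noncomputable def gain {Ω X : Type*} (d T : ℕ)
    (S : X → ℕ → Ω → EuclideanSpace ℝ (Fin d))
    (H : ℕ → Ω → EuclideanSpace ℝ (Fin d)) (θ : X) (ω : Ω) : ℝ :=
  ∑ t ∈ Finset.Icc 1 T, ⟪H t ω, S θ t ω - S θ (t - 1) ω⟫

/-- A (predictable) trading strategy: `H_t` is `F_{t-1}`-measurable for `1 ≤ t ≤ T`. -/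
def IsStrategy {Ω : Type*} (𝓕 : ℕ → MeasurableSpace Ω) (d T : ℕ)
    (H : ℕ → Ω → EuclideanSpace ℝ (Fin d)) : Prop :=
  ∀ t, 1 ≤ t → t ≤ T → StronglyMeasurable[𝓕 (t - 1)] (H t)

/-- No Robust Arbitrage: any strategy whose terminal gain is a.s. nonnegative in every
model `θ ∈ Θ` has a.s. zero terminal gain in every model `θ ∈ Θ`. -/
def NRA {Ω X : Type*} [MeasurableSpace Ω] (P : Measure Ω)
    (𝓕 : ℕ → MeasurableSpace Ω) (d T : ℕ) (Θ : Set X)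
    (S : X → ℕ → Ω → EuclideanSpace ℝ (Fin d)) : Prop :=
  ∀ H : ℕ → Ω → EuclideanSpace ℝ (Fin d), IsStrategy 𝓕 d T H →
    (∀ θ ∈ Θ, ∀ᵐ ω ∂P, 0 ≤ gain d T S H θ ω) →
    (∀ θ ∈ Θ, ∀ᵐ ω ∂P, gain d T S H θ ω = 0)


section Auxiliary

lemma meas_comp_nat {Ω β : Type*} {m : MeasurableSpace Ω} [MeasurableSpace β]
    {f : ℕ → Ω → β} (hf : ∀ n, Measurable[m] (f n)) {g : Ω → ℕ}
    (hg : Measurable[m] g) : Measurable[m] (fun ω => f (g ω) ω) := by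
  intro s hs
  have : (fun ω => f (g ω) ω) ⁻¹' s = ⋃ n, ({ω | g ω = n} ∩ (f n ⁻¹' s)) := by
    ext ω
    simp only [mem_preimage, mem_iUnion, mem_inter_iff, mem_setOf_eq]
    constructor
    · intro h; exact ⟨g ω, rfl, h⟩
    · rintro ⟨n, hn, h⟩; rw [hn]; exact h
  rw [this]
  exact MeasurableSet.iUnion fun n =>
    (hg (measurableSet_singleton n)).inter (hf n hs)

lemma exists_scalar_subseq {Ω : Type*} {m : MeasurableSpace Ω}
    (x : ℕ → Ω → ℝ) (hx : ∀ n, Measurable[m] (x n)) (hb : ∀ n ω, |x n ω| ≤ 1) :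
    ∃ τ : Ω → ℕ → ℕ, (∀ ω, StrictMono (τ ω)) ∧ (∀ k, Measurable[m] (fun ω => τ ω k)) ∧
      ∀ ω, ∃ L : ℝ, Tendsto (fun k => x (τ ω k) ω) atTop (𝓝 L) := by
  classical
  set c : Ω → ℝ := fun ω => limsup (fun n => x n ω) atTop with hc_def
  have hc : Measurable[m] c := Measurable.limsup hx
  have hbdd : ∀ ω, IsBoundedUnder (· ≤ ·) atTop (fun n => x n ω) :=
    fun ω => isBoundedUnder_of ⟨1, fun n => (abs_le.1 (hb n ω)).2⟩
  have hbdd' : ∀ ω, IsBoundedUnder (· ≥ ·) atTop (fun n => x n ω) :=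
    fun ω => isBoundedUnder_of ⟨-1, fun n => (abs_le.1 (hb n ω)).1⟩
  have hex : ∀ ω (k N : ℕ), ∃ M, N ≤ M ∧ |x M ω - c ω| < ((k : ℝ) + 1)⁻¹ := by
    intro ω k N
    have hε : (0:ℝ) < ((k:ℝ)+1)⁻¹ := by positivity
    have hfreq : ∃ᶠ n in atTop, c ω - ((k:ℝ)+1)⁻¹ < x n ω :=
      frequently_lt_of_lt_limsup (hbdd' ω).isCoboundedUnder_flip (by linarith)
    have hev : ∀ᶠ n in atTop, x n ω < c ω + ((k:ℝ)+1)⁻¹ :=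
      eventually_lt_of_limsup_lt (by linarith) (hbdd ω)
    obtain ⟨M, ⟨h1, h2⟩, h3⟩ :=
      ((hfreq.and_eventually hev).and_eventually (eventually_ge_atTop N)).exists
    exact ⟨M, h3, abs_sub_lt_iff.2 ⟨by linarith, by linarith⟩⟩
  set τ : Ω → ℕ → ℕ := fun ω => Nat.rec (Nat.find (hex ω 0 0))
    (fun k ih => Nat.find (hex ω (k+1) (ih+1))) with hτ_def
  have hτ_succ : ∀ ω k, τ ω (k+1) = Nat.find (hex ω (k+1) (τ ω k + 1)) := fun ω k => rfl
  have hτ_lt : ∀ ω k, τ ω k < τ ω (k+1) := by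
    intro ω k
    have := (Nat.find_spec (hex ω (k+1) (τ ω k + 1))).1
    rw [hτ_succ]; omega
  have hτ_close : ∀ ω k, |x (τ ω k) ω - c ω| < ((k:ℝ)+1)⁻¹ := by
    intro ω k
    cases k with
    | zero => exact (Nat.find_spec (hex ω 0 0)).2
    | succ k => rw [hτ_succ]; exact (Nat.find_spec (hex ω (k+1) (τ ω k + 1))).2
  have hm : ∀ (N M : ℕ), MeasurableSet[m] {ω | |x M ω - c ω| < ((N:ℝ)+1)⁻¹} :=
    fun N M => measurableSet_lt ((hx M).sub hc).abs measurable_const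
  refine ⟨τ, fun ω => strictMono_nat_of_lt_succ (hτ_lt ω), ?_, ?_⟩
  · intro k
    induction k with
    | zero =>
        exact measurable_find (fun ω => hex ω 0 0) (fun M => by simpa using hm 0 M)
    | succ k ih =>
        have heq : (fun ω => τ ω (k+1)) = fun ω => Nat.find (hex ω (k+1) (τ ω k + 1)) := rfl
        rw [heq]
        refine measurable_find (fun ω => hex ω (k+1) (τ ω k + 1)) (fun M => ?_)
        have h1 : MeasurableSet[m] {ω | τ ω k + 1 ≤ M} :=
          ih (MeasurableSet.of_discrete (s := {n : ℕ | n + 1 ≤ M}))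
        exact h1.inter (hm (k+1) M)
  · intro ω
    refine ⟨c ω, Metric.tendsto_atTop.2 fun ε hε => ?_⟩
    obtain ⟨N, hN⟩ := exists_nat_one_div_lt hε
    refine ⟨N, fun k hk => ?_⟩
    rw [Real.dist_eq]
    calc |x (τ ω k) ω - c ω| < ((k:ℝ)+1)⁻¹ := hτ_close ω k
    _ ≤ ((N:ℝ)+1)⁻¹ := by gcongr <;> first | positivity | exact_mod_cast hk
    _ < ε := by rwa [one_div] at hN

lemma eucl_coord_measurable {d : ℕ} (i : Fin d) :
    Measurable (fun v : EuclideanSpace ℝ (Fin d) => v i) := by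
  have h1 : Measurable (fun w : Fin d → ℝ => w i) := measurable_pi_apply i
  have h2 : Measurable (EuclideanSpace.equiv (Fin d) ℝ : EuclideanSpace ℝ (Fin d) → Fin d → ℝ) :=
    (EuclideanSpace.equiv (Fin d) ℝ).continuous.measurable
  exact h1.comp h2

lemma eucl_abs_coord_le {d : ℕ} (v : EuclideanSpace ℝ (Fin d)) (i : Fin d) :
    |v i| ≤ ‖v‖ := by
  have h := abs_real_inner_le_norm (EuclideanSpace.single i (1:ℝ)) v
  rw [EuclideanSpace.inner_single_left] at h
  simpa [EuclideanSpace.norm_single] using h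

lemma exists_vector_subseq {Ω : Type*} {m : MeasurableSpace Ω} {d : ℕ}
    (G : ℕ → Ω → EuclideanSpace ℝ (Fin d)) (hG : ∀ n, Measurable[m] (G n))
    (hb : ∀ n ω, ‖G n ω‖ ≤ 1) :
    ∃ σ : Ω → ℕ → ℕ, (∀ ω, StrictMono (σ ω)) ∧ (∀ k, Measurable[m] (fun ω => σ ω k)) ∧
      ∀ ω, ∃ L, Tendsto (fun k => G (σ ω k) ω) atTop (𝓝 L) := by
  classical
  have main : ∀ j : ℕ, ∃ σ : Ω → ℕ → ℕ, (∀ ω, StrictMono (σ ω)) ∧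
      (∀ k, Measurable[m] (fun ω => σ ω k)) ∧
      ∀ ω, ∀ i : Fin d, (i : ℕ) < j →
        ∃ L : ℝ, Tendsto (fun k => G (σ ω k) ω i) atTop (𝓝 L) := by
    intro j
    induction j with
    | zero =>
        exact ⟨fun _ k => k, fun _ => strictMono_id, fun k => measurable_const,
          fun ω i hi => absurd hi (Nat.not_lt_zero _)⟩
    | succ j ihj =>
        obtain ⟨σ, hσ_mono, hσ_meas, hσ_conv⟩ := ihj
        by_cases hjd : j < d
        · set i₀ : Fin d := ⟨j, hjd⟩
          set y : ℕ → Ω → ℝ := fun n ω => G (σ ω n) ω i₀ with hy_def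
          have hy_meas : ∀ n, Measurable[m] (y n) := by
            intro n
            have : ∀ p : ℕ, Measurable[m] (fun ω => G p ω i₀) :=
              fun p => (eucl_coord_measurable i₀).comp (hG p)
            exact meas_comp_nat this (hσ_meas n)
          have hy_bdd : ∀ n ω, |y n ω| ≤ 1 :=
            fun n ω => le_trans (eucl_abs_coord_le _ i₀) (hb _ ω)
          obtain ⟨τ, hτ_mono, hτ_meas, hτ_conv⟩ := exists_scalar_subseq y hy_meas hy_bdd
          refine ⟨fun ω k => σ ω (τ ω k), fun ω => (hσ_mono ω).comp (hτ_mono ω), ?_, ?_⟩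
          · intro k
            exact meas_comp_nat (fun n => hσ_meas n) (hτ_meas k)
          · intro ω i hi
            rcases Nat.lt_succ_iff_lt_or_eq.1 hi with hi' | hi'
            · obtain ⟨L, hL⟩ := hσ_conv ω i hi'
              exact ⟨L, hL.comp ((hτ_mono ω).tendsto_atTop)⟩
            · obtain ⟨L, hL⟩ := hτ_conv ω
              refine ⟨L, ?_⟩
              have : i = i₀ := Fin.ext hi'
              rw [this]
              exact hL
        · -- j ≥ d : nothing new to do
          refine ⟨σ, hσ_mono, hσ_meas, fun ω i hi => hσ_conv ω i ?_⟩
          exact lt_of_lt_of_le i.isLt (le_of_not_gt hjd)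
  obtain ⟨σ, hσ_mono, hσ_meas, hσ_conv⟩ := main d
  refine ⟨σ, hσ_mono, hσ_meas, fun ω => ?_⟩
  have hc : ∀ i : Fin d, ∃ L : ℝ, Tendsto (fun k => G (σ ω k) ω i) atTop (𝓝 L) :=
    fun i => hσ_conv ω i i.isLt
  choose L hL using hc
  set e := EuclideanSpace.equiv (Fin d) ℝ
  refine ⟨e.symm L, ?_⟩
  have h1 : Tendsto (fun k => (e (G (σ ω k) ω) : Fin d → ℝ)) atTop (𝓝 L) :=
    tendsto_pi_nhds.2 fun i => hL i
  have h2 := (e.symm.continuous.tendsto L).comp h1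
  simpa [Function.comp_def] using h2

lemma exists_limit_direction {Ω : Type*} {m : MeasurableSpace Ω} {d : ℕ} (hd : 1 ≤ d)
    (H : ℕ → Ω → EuclideanSpace ℝ (Fin d)) (hH : ∀ n, Measurable[m] (H n)) :
    ∃ (A : Set Ω) (h : Ω → EuclideanSpace ℝ (Fin d)),
      MeasurableSet[m] A ∧ Measurable[m] h ∧
      (∀ ω, ω ∉ A ↔ ∃ C : ℝ, ∀ n, ‖H n ω‖ ≤ C) ∧
      (∀ ω ∉ A, h ω = 0) ∧ (∀ ω ∈ A, ‖h ω‖ = 1) ∧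
      (∀ ω ∈ A, ∃ ψ : ℕ → ℕ,
        (∀ k : ℕ, ((k : ℝ) + 1) ≤ ‖H (ψ k) ω‖) ∧
        Tendsto (fun k => (‖H (ψ k) ω‖)⁻¹ • H (ψ k) ω) atTop (𝓝 (h ω))) := by
  classical
  set A : Set Ω := {ω | ¬ ∃ C : ℝ, ∀ n, ‖H n ω‖ ≤ C} with hA_def
  have hA_iff : ∀ ω, ω ∉ A ↔ ∃ C : ℝ, ∀ n, ‖H n ω‖ ≤ C := by
    intro ω; simp [hA_def]
  have hA_meas : MeasurableSet[m] A := by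
    have : A = ⋂ C : ℕ, ⋃ n, {ω | (C : ℝ) < ‖H n ω‖} := by
      ext ω
      simp only [hA_def, mem_setOf_eq, mem_iInter, mem_iUnion]
      constructor
      · intro hω C
        by_contra hC
        push_neg at hC
        exact hω ⟨C, fun n => hC n⟩
      · rintro hω ⟨C, hC⟩
        obtain ⟨N, hN⟩ := exists_nat_ge C
        obtain ⟨n, hn⟩ := hω N
        exact absurd (le_trans (hC n) hN) (not_le.2 hn)
    rw [this]
    exact MeasurableSet.iInter fun C => MeasurableSet.iUnion fun n =>
      measurableSet_lt measurable_const (hH n).norm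
  have hex : ∀ ω (k : ℕ), ∃ M, (ω ∈ A → ((k : ℝ) + 1) ≤ ‖H M ω‖) := by
    intro ω k
    by_cases hω : ω ∈ A
    · rw [hA_def, mem_setOf_eq] at hω
      push_neg at hω
      obtain ⟨M, hM⟩ := hω ((k : ℝ) + 1)
      exact ⟨M, fun _ => le_of_lt hM⟩
    · exact ⟨0, fun h => absurd h hω⟩
  set τ : Ω → ℕ → ℕ := fun ω k => Nat.find (hex ω k) with hτ_def
  have hτ_meas : ∀ k, Measurable[m] (fun ω => τ ω k) := by
    intro k
    refine measurable_find (fun ω => hex ω k) (fun M => ?_)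
    have : {ω | ω ∈ A → ((k : ℝ) + 1) ≤ ‖H M ω‖}
        = Aᶜ ∪ {ω | ((k : ℝ) + 1) ≤ ‖H M ω‖} := by
      ext ω; by_cases hω : ω ∈ A <;> simp [hω]
    rw [this]
    exact hA_meas.compl.union (measurableSet_le measurable_const (hH M).norm)
  have hτ_spec : ∀ ω ∈ A, ∀ k : ℕ, ((k : ℝ) + 1) ≤ ‖H (τ ω k) ω‖ :=
    fun ω hω k => Nat.find_spec (hex ω k) hω
  -- the normalized sequence
  set e₀ : EuclideanSpace ℝ (Fin d) := EuclideanSpace.single (⟨0, hd⟩ : Fin d) (1:ℝ) with he₀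
  have he₀_norm : ‖e₀‖ = 1 := by simp [he₀, EuclideanSpace.norm_single]
  set G : ℕ → Ω → EuclideanSpace ℝ (Fin d) :=
    fun k ω => if ω ∈ A then (‖H (τ ω k) ω‖)⁻¹ • H (τ ω k) ω else e₀ with hG_def
  have hG_norm : ∀ k ω, ‖G k ω‖ = 1 := by
    intro k ω
    rw [hG_def]
    by_cases hω : ω ∈ A
    · have hpos : (0:ℝ) < ‖H (τ ω k) ω‖ :=
        lt_of_lt_of_le (by positivity) (hτ_spec ω hω k)
      simp only [if_pos hω, norm_smul, norm_inv, norm_norm]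
      field_simp
    · simp [if_neg hω, he₀_norm]
  have hG_meas : ∀ k, Measurable[m] (G k) := by
    intro k
    have hin : Measurable[m] (fun ω => (‖H (τ ω k) ω‖)⁻¹ • H (τ ω k) ω) := by
      have hf : ∀ M : ℕ, Measurable[m] (fun ω => (‖H M ω‖)⁻¹ • H M ω) :=
        fun M => ((hH M).norm.inv).smul (hH M)
      exact meas_comp_nat hf (hτ_meas k)
    exact Measurable.ite hA_meas hin measurable_const
  obtain ⟨σ, hσ_mono, hσ_meas, hσ_conv⟩ :=
    exists_vector_subseq G hG_meas (fun k ω => le_of_eq (hG_norm k ω))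
  have hg_meas : ∀ k, Measurable[m] (fun ω => G (σ ω k) ω) :=
    fun k => meas_comp_nat hG_meas (hσ_meas k)
  have hlim : ∀ ω, ∃ L, Tendsto (fun k => G (σ ω k) ω) atTop (𝓝 L) := hσ_conv
  set h₀ : Ω → EuclideanSpace ℝ (Fin d) := fun ω => (hlim ω).choose with hh₀
  have hh₀_lim : ∀ ω, Tendsto (fun k => G (σ ω k) ω) atTop (𝓝 (h₀ ω)) :=
    fun ω => (hlim ω).choose_spec
  have hh₀_meas : Measurable[m] h₀ :=
    measurable_of_tendsto_metrizable hg_meas (tendsto_pi_nhds.2 hh₀_lim)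
  have hh₀_norm : ∀ ω, ‖h₀ ω‖ = 1 := by
    intro ω
    have h1 : Tendsto (fun k => ‖G (σ ω k) ω‖) atTop (𝓝 ‖h₀ ω‖) :=
      (continuous_norm.tendsto _).comp (hh₀_lim ω)
    have h2 : Tendsto (fun k : ℕ => (1:ℝ)) atTop (𝓝 1) := tendsto_const_nhds
    have : (fun k => ‖G (σ ω k) ω‖) = fun _ : ℕ => (1:ℝ) := funext fun k => hG_norm _ ω
    rw [this] at h1
    exact tendsto_nhds_unique h1 h2
  refine ⟨A, A.indicator h₀, hA_meas, hh₀_meas.indicator hA_meas, hA_iff, ?_, ?_, ?_⟩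
  · intro ω hω; exact indicator_of_notMem hω h₀
  · intro ω hω; rw [indicator_of_mem hω]; exact hh₀_norm ω
  · intro ω hω
    refine ⟨fun k => τ ω (σ ω k), fun k => ?_, ?_⟩
    · calc ((k : ℝ) + 1) ≤ ((σ ω k : ℝ) + 1) := by
            have : k ≤ σ ω k := (hσ_mono ω).le_apply
            exact_mod_cast Nat.add_le_add_right this 1
      _ ≤ ‖H (τ ω (σ ω k)) ω‖ := hτ_spec ω hω (σ ω k)
    · rw [indicator_of_mem hω]
      have : ∀ k, G (σ ω k) ω = (‖H (τ ω (σ ω k)) ω‖)⁻¹ • H (τ ω (σ ω k)) ω :=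
        fun k => if_pos hω
      have h1 := hh₀_lim ω
      simpa only [this] using h1

end Auxiliary

/-- **Boundedness of canonical-form sequences (Lemma 3.2 (i), (i')).**
Fix `1 ≤ t ≤ T` and a dense subset `Γ` of `Θ`, and let `(H_n)` be a sequence of
`F_{t-1}`-measurable random vectors in canonical form.  Then `(H_n)` is a.s. bounded iff
for every `θ ∈ Γ` the sequence `(⟨H_n, ΔS^θ_t⟩)` is a.s. bounded; and, if moreover NRA
holds, iff for every `θ ∈ Γ` the sequence of negative parts `((⟨H_n, ΔS^θ_t⟩)⁻)` is
a.s. bounded. -/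
theorem canonical_bounded_iff
    {Ω : Type*} [mΩ : MeasurableSpace Ω] (P : Measure Ω) [IsProbabilityMeasure P]
    {X : Type*} [MetricSpace X] [TopologicalSpace.SeparableSpace X]
    (d T : ℕ) (hd : 1 ≤ d) (hT : 1 ≤ T)
    (𝓕 : ℕ → MeasurableSpace Ω) (h𝓕_mono : Monotone 𝓕) (h𝓕_le : ∀ t, 𝓕 t ≤ mΩ)
    (h𝓕_null : ∀ N : Set Ω, P N = 0 → MeasurableSet[𝓕 0] N)
    (Θ : Set X) (hΘ_closed : IsClosed Θ) (hΘ_ne : Θ.Nonempty)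
    (S : X → ℕ → Ω → EuclideanSpace ℝ (Fin d))
    (hS_adapted : ∀ θ ∈ Θ, ∀ t ≤ T, StronglyMeasurable[𝓕 t] (S θ t))
    (hS_cont : ∀ (θs : ℕ → X) (θ : X), (∀ n, θs n ∈ Θ) → θ ∈ Θ →
      Tendsto θs atTop (𝓝 θ) → ∃ φ : ℕ → ℕ, StrictMono φ ∧
        ∀ t ≤ T, ∀ᵐ ω ∂P, Tendsto (fun k => S (θs (φ k)) t ω) atTop (𝓝 (S θ t ω)))
    (t : ℕ) (ht1 : 1 ≤ t) (htT : t ≤ T)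
    (Γ : Set X) (hΓ_sub : Γ ⊆ Θ) (hΓ_dense : Θ ⊆ closure Γ)
    (Proj : Ω → EuclideanSpace ℝ (Fin d) →L[ℝ] EuclideanSpace ℝ (Fin d))
    (hProj_meas : ∀ x, Measurable[𝓕 (t - 1)] fun ω => Proj ω x)
    (hProj_idem : ∀ ω, (Proj ω).comp (Proj ω) = Proj ω)
    (hProj_selfadj : ∀ ω x y, ⟪Proj ω x, y⟫ = ⟪x, Proj ω y⟫)
    (hProj_char : ∀ h : Ω → EuclideanSpace ℝ (Fin d), StronglyMeasurable[𝓕 (t - 1)] h →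
      ((∀ θ ∈ Θ, ∀ᵐ ω ∂P, ⟪h ω, S θ t ω - S θ (t - 1) ω⟫ = 0) ↔
        ∀ᵐ ω ∂P, Proj ω (h ω) = h ω))
    (H : ℕ → Ω → EuclideanSpace ℝ (Fin d))
    (hH_meas : ∀ n, StronglyMeasurable[𝓕 (t - 1)] (H n))
    (hH_canon : ∀ n, ∀ᵐ ω ∂P, H n ω - Proj ω (H n ω) = H n ω) :
    ((∀ᵐ ω ∂P, ∃ C : ℝ, ∀ n, ‖H n ω‖ ≤ C) ↔
      ∀ θ ∈ Γ, ∀ᵐ ω ∂P, ∃ C : ℝ, ∀ n, |⟪H n ω, S θ t ω - S θ (t - 1) ω⟫| ≤ C) ∧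
    (NRA P 𝓕 d T Θ S →
      ((∀ᵐ ω ∂P, ∃ C : ℝ, ∀ n, ‖H n ω‖ ≤ C) ↔
        ∀ θ ∈ Γ, ∀ᵐ ω ∂P, ∃ C : ℝ, ∀ n,
          max (-⟪H n ω, S θ t ω - S θ (t - 1) ω⟫) 0 ≤ C)) := by
  classical
  obtain ⟨A, h, hA_meas, hh_meas, hA_iff, hh_zero, hh_one, hh_lim⟩ :=
    exists_limit_direction (m := 𝓕 (t - 1)) hd H (fun n => (hH_meas n).measurable)
  -- forward direction (i)
  have fwd : (∀ᵐ ω ∂P, ∃ C : ℝ, ∀ n, ‖H n ω‖ ≤ C) →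
      ∀ θ ∈ Γ, ∀ᵐ ω ∂P, ∃ C : ℝ, ∀ n, |⟪H n ω, S θ t ω - S θ (t - 1) ω⟫| ≤ C := by
    intro hb θ hθ
    filter_upwards [hb] with ω hω
    obtain ⟨C, hC⟩ := hω
    refine ⟨C * ‖S θ t ω - S θ (t - 1) ω‖, fun n => ?_⟩
    calc |⟪H n ω, S θ t ω - S θ (t - 1) ω⟫|
        ≤ ‖H n ω‖ * ‖S θ t ω - S θ (t - 1) ω‖ := abs_real_inner_le_norm _ _
      _ ≤ C * ‖S θ t ω - S θ (t - 1) ω‖ :=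
          mul_le_mul_of_nonneg_right (hC n) (norm_nonneg _)
  -- extension of closed-set constraints from Γ to Θ
  have ext : ∀ F : Set ℝ, IsClosed F →
      (∀ θ ∈ Γ, ∀ᵐ ω ∂P, ⟪h ω, S θ t ω - S θ (t - 1) ω⟫ ∈ F) →
      ∀ θ ∈ Θ, ∀ᵐ ω ∂P, ⟪h ω, S θ t ω - S θ (t - 1) ω⟫ ∈ F := by
    intro F hF hΓF θ hθ
    rcases mem_closure_iff_seq_limit.1 (hΓ_dense hθ) with ⟨θs, hθs_mem, hθs_lim⟩
    obtain ⟨φ, hφ_mono, hφ_conv⟩ :=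
      hS_cont θs θ (fun n => hΓ_sub (hθs_mem n)) hθ hθs_lim
    have hconv_t := hφ_conv t htT
    have hconv_t' := hφ_conv (t - 1) (le_trans (Nat.sub_le t 1) htT)
    have hall : ∀ᵐ ω ∂P, ∀ k,
        ⟪h ω, S (θs (φ k)) t ω - S (θs (φ k)) (t - 1) ω⟫ ∈ F :=
      ae_all_iff.2 fun k => hΓF (θs (φ k)) (hθs_mem (φ k))
    filter_upwards [hconv_t, hconv_t', hall] with ω h1 h2 h3
    have htend : Tendsto
        (fun k => ⟪h ω, S (θs (φ k)) t ω - S (θs (φ k)) (t - 1) ω⟫)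
        atTop (𝓝 ⟪h ω, S θ t ω - S θ (t - 1) ω⟫) :=
      Filter.Tendsto.inner tendsto_const_nhds (h1.sub h2)
    exact hF.mem_of_tendsto htend (Eventually.of_forall h3)
  -- the vanishing-rate of normalized inner products
  have hrate : ∀ (C : ℝ), Tendsto (fun k : ℕ => C / ((k : ℝ) + 1)) atTop (𝓝 0) := by
    intro C
    have := tendsto_one_div_add_atTop_nhds_zero_nat.const_mul C
    simpa [div_eq_mul_inv, one_div] using this
  -- one-sided bound on Γ gives nonnegative limit inner product
  have keyΓ_ge : (∀ θ ∈ Γ, ∀ᵐ ω ∂P, ∃ C : ℝ, ∀ n,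
        max (-⟪H n ω, S θ t ω - S θ (t - 1) ω⟫) 0 ≤ C) →
      ∀ θ ∈ Γ, ∀ᵐ ω ∂P, (0:ℝ) ≤ ⟪h ω, S θ t ω - S θ (t - 1) ω⟫ := by
    intro hb θ hθ
    filter_upwards [hb θ hθ] with ω hω
    obtain ⟨C, hC⟩ := hω
    by_cases hωA : ω ∈ A
    · obtain ⟨ψ, hψ_norm, hψ_lim⟩ := hh_lim ω hωA
      have htend : Tendsto
          (fun k => ⟪(‖H (ψ k) ω‖)⁻¹ • H (ψ k) ω, S θ t ω - S θ (t - 1) ω⟫)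
          atTop (𝓝 ⟪h ω, S θ t ω - S θ (t - 1) ω⟫) :=
        Filter.Tendsto.inner hψ_lim tendsto_const_nhds
      have hC0 : 0 ≤ C := le_trans (le_max_right _ 0) (hC 0)
      have hlower : ∀ k : ℕ, -(C / ((k:ℝ)+1))
          ≤ ⟪(‖H (ψ k) ω‖)⁻¹ • H (ψ k) ω, S θ t ω - S θ (t - 1) ω⟫ := by
        intro k
        have hr : ((k:ℝ)+1) ≤ ‖H (ψ k) ω‖ := hψ_norm k
        have hrpos : (0:ℝ) < ‖H (ψ k) ω‖ := lt_of_lt_of_le (by positivity) hr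
        rw [real_inner_smul_left]
        have h1 : -C ≤ ⟪H (ψ k) ω, S θ t ω - S θ (t - 1) ω⟫ := by
          have := le_trans (le_max_left _ 0) (hC (ψ k))
          linarith
        have h2 : (‖H (ψ k) ω‖)⁻¹ ≤ ((k:ℝ)+1)⁻¹ := inv_anti₀ (by positivity) hr
        have h3 : (‖H (ψ k) ω‖)⁻¹ * (-C)
            ≤ (‖H (ψ k) ω‖)⁻¹ * ⟪H (ψ k) ω, S θ t ω - S θ (t - 1) ω⟫ :=
          mul_le_mul_of_nonneg_left h1 (inv_nonneg.2 hrpos.le)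
        have h4 : ((k:ℝ)+1)⁻¹ * (-C) ≤ (‖H (ψ k) ω‖)⁻¹ * (-C) :=
          mul_le_mul_of_nonpos_right h2 (by linarith)
        have h5 : -(C / ((k:ℝ)+1)) = ((k:ℝ)+1)⁻¹ * (-C) := by
          rw [div_eq_mul_inv]; ring
        linarith
      have hzero : Tendsto (fun k : ℕ => -(C / ((k:ℝ)+1))) atTop (𝓝 0) := by
        simpa using (hrate C).neg
      exact le_of_tendsto_of_tendsto' hzero htend hlower
    · rw [hh_zero ω hωA]
      simp
  -- two-sided bound on Γ gives vanishing limit inner product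
  have keyΓ_eq : (∀ θ ∈ Γ, ∀ᵐ ω ∂P, ∃ C : ℝ, ∀ n,
        |⟪H n ω, S θ t ω - S θ (t - 1) ω⟫| ≤ C) →
      ∀ θ ∈ Γ, ∀ᵐ ω ∂P, ⟪h ω, S θ t ω - S θ (t - 1) ω⟫ = 0 := by
    intro hb θ hθ
    filter_upwards [hb θ hθ] with ω hω
    obtain ⟨C, hC⟩ := hω
    by_cases hωA : ω ∈ A
    · obtain ⟨ψ, hψ_norm, hψ_lim⟩ := hh_lim ω hωA
      have htend : Tendsto
          (fun k => ⟪(‖H (ψ k) ω‖)⁻¹ • H (ψ k) ω, S θ t ω - S θ (t - 1) ω⟫)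
          atTop (𝓝 ⟪h ω, S θ t ω - S θ (t - 1) ω⟫) :=
        Filter.Tendsto.inner hψ_lim tendsto_const_nhds
      have hbound : ∀ k : ℕ,
          ‖⟪(‖H (ψ k) ω‖)⁻¹ • H (ψ k) ω, S θ t ω - S θ (t - 1) ω⟫‖ ≤ C / ((k:ℝ)+1) := by
        intro k
        have hr : ((k:ℝ)+1) ≤ ‖H (ψ k) ω‖ := hψ_norm k
        have hrpos : (0:ℝ) < ‖H (ψ k) ω‖ := lt_of_lt_of_le (by positivity) hr
        have h2 : (‖H (ψ k) ω‖)⁻¹ ≤ ((k:ℝ)+1)⁻¹ := inv_anti₀ (by positivity) hr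
        rw [real_inner_smul_left, Real.norm_eq_abs, abs_mul, abs_inv, abs_norm]
        calc (‖H (ψ k) ω‖)⁻¹ * |⟪H (ψ k) ω, S θ t ω - S θ (t - 1) ω⟫|
            ≤ ((k:ℝ)+1)⁻¹ * C :=
              mul_le_mul h2 (hC (ψ k)) (abs_nonneg _) (by positivity)
          _ = C / ((k:ℝ)+1) := by rw [div_eq_mul_inv]; ring
      have hzero : Tendsto
          (fun k => ⟪(‖H (ψ k) ω‖)⁻¹ • H (ψ k) ω, S θ t ω - S θ (t - 1) ω⟫)
          atTop (𝓝 0) := squeeze_zero_norm hbound (hrate C)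
      exact tendsto_nhds_unique htend hzero
    · rw [hh_zero ω hωA]
      simp
  -- the final contradiction step
  have final : (∀ θ ∈ Θ, ∀ᵐ ω ∂P, ⟪h ω, S θ t ω - S θ (t - 1) ω⟫ = 0) →
      ∀ᵐ ω ∂P, ∃ C : ℝ, ∀ n, ‖H n ω‖ ≤ C := by
    intro hzero
    have hsm : StronglyMeasurable[𝓕 (t - 1)] h := hh_meas.stronglyMeasurable
    have hproj : ∀ᵐ ω ∂P, Proj ω (h ω) = h ω := (hProj_char h hsm).1 hzero
    have hcanon_all : ∀ᵐ ω ∂P, ∀ n, H n ω - Proj ω (H n ω) = H n ω :=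
      ae_all_iff.2 hH_canon
    have hcanon : ∀ᵐ ω ∂P, h ω - Proj ω (h ω) = h ω := by
      filter_upwards [hcanon_all] with ω hω
      by_cases hωA : ω ∈ A
      · obtain ⟨ψ, hψ_norm, hψ_lim⟩ := hh_lim ω hωA
        have hcont : Continuous (fun v : EuclideanSpace ℝ (Fin d) => v - Proj ω v) :=
          continuous_id.sub (Proj ω).continuous
        have h1 : Tendsto
            (fun k => (‖H (ψ k) ω‖)⁻¹ • H (ψ k) ω - Proj ω ((‖H (ψ k) ω‖)⁻¹ • H (ψ k) ω))
            atTop (𝓝 (h ω - Proj ω (h ω))) := by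
          exact (hcont.tendsto _).comp hψ_lim
        have h2 : ∀ k : ℕ, (‖H (ψ k) ω‖)⁻¹ • H (ψ k) ω
              - Proj ω ((‖H (ψ k) ω‖)⁻¹ • H (ψ k) ω)
            = (‖H (ψ k) ω‖)⁻¹ • H (ψ k) ω := by
          intro k
          rw [(Proj ω).map_smul, ← smul_sub, hω (ψ k)]
        rw [funext h2] at h1
        exact tendsto_nhds_unique h1 hψ_lim
      · rw [hh_zero ω hωA]
        simp
    have hzero' : ∀ᵐ ω ∂P, h ω = 0 := by
      filter_upwards [hproj, hcanon] with ω h1 h2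
      have h3 : Proj ω (h ω) = 0 := by rwa [sub_eq_self] at h2
      rw [← h1, h3]
    filter_upwards [hzero'] with ω hω
    have hωA : ω ∉ A := by
      intro hωA
      have h1 := hh_one ω hωA
      rw [hω] at h1
      simp at h1
    exact (hA_iff ω).1 hωA
  constructor
  · refine ⟨fwd, fun habs => final ?_⟩
    have h0Γ := keyΓ_eq habs
    have h0Θ := ext {0} isClosed_singleton
      (fun θ hθ => (h0Γ θ hθ).mono fun ω hω => by simpa using hω)
    exact fun θ hθ => (h0Θ θ hθ).mono fun ω hω => by simpa using hω
  · intro hnra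
    constructor
    · intro hb θ hθ
      filter_upwards [fwd hb θ hθ] with ω hω
      obtain ⟨C, hC⟩ := hω
      refine ⟨C, fun n => ?_⟩
      refine max_le (le_trans (neg_le_abs _) (hC n)) (le_trans (abs_nonneg _) (hC n))
    · intro hneg
      have hgeΓ := keyΓ_ge hneg
      have hgeΘ : ∀ θ ∈ Θ, ∀ᵐ ω ∂P, (0:ℝ) ≤ ⟪h ω, S θ t ω - S θ (t - 1) ω⟫ := by
        have := ext (Ici 0) isClosed_Ici
          (fun θ hθ => (hgeΓ θ hθ).mono fun ω hω => hω)
        exact fun θ hθ => (this θ hθ).mono fun ω hω => hω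
      set K : ℕ → Ω → EuclideanSpace ℝ (Fin d) :=
        fun s => if s = t then h else (fun _ => 0) with hK_def
      have hstrat : IsStrategy 𝓕 d T K := by
        intro s hs1 hsT
        by_cases hst : s = t
        · subst hst
          simp only [hK_def, if_pos rfl]
          exact hh_meas.stronglyMeasurable
        · simp only [hK_def, if_neg hst]
          exact stronglyMeasurable_const
      have hgain : ∀ θ ω, gain d T S K θ ω = ⟪h ω, S θ t ω - S θ (t - 1) ω⟫ := by
        intro θ ω
        unfold gain
        rw [Finset.sum_eq_single_of_mem t (Finset.mem_Icc.2 ⟨ht1, htT⟩)]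
        · simp [hK_def]
        · intro s _ hst
          simp [hK_def, if_neg hst]
      have hpos : ∀ θ ∈ Θ, ∀ᵐ ω ∂P, 0 ≤ gain d T S K θ ω := by
        intro θ hθ
        filter_upwards [hgeΘ θ hθ] with ω hω
        rw [hgain]
        exact hω
      have hzero := hnra K hstrat hpos
      refine final fun θ hθ => ?_
      filter_upwards [hzero θ hθ] with ω hω
      rwa [hgain] at hω
end

section
/- Fix 1 ≤ t ≤ T, let Γ be a dense subset of Θ, and let (H_n)_{n∈ℕ} be a sequence of F_{t−1}-measurable ℝ^d-valued random variables in canonical form. Then (H_n)_{n∈ℕ} converges P-almost surely if and only if for every θ ∈ Γ the sequence (⟨H_n, ΔS^θ_t⟩)_{n∈ℕ} converges P-almost surely. -/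
open MeasureTheory Filter Set
open scoped RealInnerProductSpace Topology

section AuxSel

variable {Ω : Type*} {m : MeasurableSpace Ω}

lemma measurable_apply_nat' {β : Type*} [MeasurableSpace β] {f : ℕ → Ω → β}
    (hf : ∀ n, Measurable (f n)) {σ : Ω → ℕ} (hσ : Measurable σ) :
    Measurable fun ω => f (σ ω) ω := by
  intro s hs
  have h : (fun ω => f (σ ω) ω) ⁻¹' s = ⋃ n, (σ ⁻¹' {n}) ∩ (f n ⁻¹' s) := by
    ext ω
    simp only [mem_preimage, mem_iUnion, mem_inter_iff, mem_singleton_iff]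
    constructor
    · intro h; exact ⟨σ ω, rfl, h⟩
    · rintro ⟨n, rfl, h⟩; exact h
  rw [h]
  exact MeasurableSet.iUnion fun n => (hσ (measurableSet_singleton n)).inter (hf n hs)

lemma measurable_nat_sInf {A : Ω → Set ℕ} (hA : ∀ k, MeasurableSet {ω | k ∈ A ω}) :
    Measurable fun ω => sInf (A ω) := by
  apply measurable_to_countable'
  intro n
  have h : (fun ω => sInf (A ω)) ⁻¹' {n} =
      ({ω | n ∈ A ω} ∩ ⋂ m' ∈ Finset.range n, {ω | m' ∉ A ω}) ∪
        {ω | n = 0 ∧ ∀ k, k ∉ A ω} := by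
    ext ω
    simp only [mem_preimage, mem_singleton_iff, mem_union, mem_inter_iff, mem_iInter,
      Finset.mem_range, mem_setOf_eq]
    constructor
    · intro h
      rcases eq_empty_or_nonempty (A ω) with he | hne
      · right
        refine ⟨?_, fun k hk => by simp [he] at hk⟩
        rw [← h, he, Nat.sInf_empty]
      · left
        refine ⟨h ▸ Nat.sInf_mem hne, fun m' hm' hmem => ?_⟩
        exact absurd (Nat.sInf_le hmem) (by omega)
    · rintro (⟨hmem, hlt⟩ | ⟨hn, hall⟩)
      · refine le_antisymm (Nat.sInf_le hmem) ?_
        by_contra hcon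
        push_neg at hcon
        exact hlt _ hcon (Nat.sInf_mem ⟨n, hmem⟩)
      · have : A ω = ∅ := eq_empty_iff_forall_notMem.2 hall
        rw [this, Nat.sInf_empty, hn]
  rw [h]
  refine MeasurableSet.union (MeasurableSet.inter (hA n) ?_) ?_
  · exact MeasurableSet.iInter fun m' => MeasurableSet.iInter fun _ => (hA m').compl
  · rcases Nat.eq_zero_or_pos n with rfl | hn
    · have : {ω | (0:ℕ) = 0 ∧ ∀ k, k ∉ A ω} = ⋂ k, {ω | k ∈ A ω}ᶜ := by
        ext ω; simp
      rw [this]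
      exact MeasurableSet.iInter fun k => (hA k).compl
    · have : {ω | n = 0 ∧ ∀ k, k ∉ A ω} = ∅ := by
        ext ω; simp only [mem_setOf_eq, mem_empty_iff_false, iff_false, not_and]
        intro h0; omega
      rw [this]
      exact MeasurableSet.empty

/-- Next index strictly beyond `prev` satisfying `P`, with escape value `prev + 1`
when no such index exists. -/
noncomputable def nextIdx (P : ℕ → Prop) (prev : ℕ) : ℕ :=
  sInf {k | (prev < k ∧ P k) ∨ (k = prev + 1 ∧ ∀ i, prev < i → ¬ P i)}

lemma nextIdx_mem (P : ℕ → Prop) (prev : ℕ) :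
    (prev < nextIdx P prev ∧ P (nextIdx P prev)) ∨
      (nextIdx P prev = prev + 1 ∧ ∀ i, prev < i → ¬ P i) := by
  have hne : {k | (prev < k ∧ P k) ∨ (k = prev + 1 ∧ ∀ i, prev < i → ¬ P i)}.Nonempty := by
    by_cases h : ∃ i, prev < i ∧ P i
    · obtain ⟨i, hi1, hi2⟩ := h
      exact ⟨i, Or.inl ⟨hi1, hi2⟩⟩
    · push_neg at h
      exact ⟨prev + 1, Or.inr ⟨rfl, h⟩⟩
  exact Nat.sInf_mem hne

lemma nextIdx_lt (P : ℕ → Prop) (prev : ℕ) : prev < nextIdx P prev := by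
  rcases nextIdx_mem P prev with ⟨h, _⟩ | ⟨h, _⟩
  · exact h
  · omega

lemma nextIdx_spec {P : ℕ → Prop} {prev : ℕ} (h : ∃ k, prev < k ∧ P k) :
    P (nextIdx P prev) := by
  rcases nextIdx_mem P prev with ⟨_, h2⟩ | ⟨_, h2⟩
  · exact h2
  · obtain ⟨k, hk1, hk2⟩ := h
    exact absurd hk2 (h2 k hk1)

lemma measurable_nextIdx {P : Ω → ℕ → Prop} {prevf : Ω → ℕ}
    (hP : ∀ k, MeasurableSet {ω | P ω k}) (hprev : Measurable prevf) :
    Measurable fun ω => nextIdx (P ω) (prevf ω) := by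
  apply measurable_nat_sInf
  intro k
  have h : {ω | k ∈ {k' | (prevf ω < k' ∧ P ω k') ∨
      (k' = prevf ω + 1 ∧ ∀ i, prevf ω < i → ¬ P ω i)}} =
      (({ω | prevf ω < k} ∩ {ω | P ω k}) ∪
        ({ω | k = prevf ω + 1} ∩ ⋂ i, ({ω | prevf ω < i}ᶜ ∪ {ω | P ω i}ᶜ))) := by
    ext ω
    simp only [mem_setOf_eq, mem_union, mem_inter_iff, mem_iInter, mem_compl_iff, mem_setOf_eq]
    constructor
    · rintro (⟨h1, h2⟩ | ⟨h1, h2⟩)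
      · exact Or.inl ⟨h1, h2⟩
      · exact Or.inr ⟨h1, fun i => by by_cases hi : prevf ω < i <;> simp [hi, h2 i]⟩
    · rintro (⟨h1, h2⟩ | ⟨h1, h2⟩)
      · exact Or.inl ⟨h1, h2⟩
      · refine Or.inr ⟨h1, fun i hi => ?_⟩
        rcases h2 i with h | h
        · exact absurd hi h
        · exact h
  rw [show {ω | k ∈ {k' | (prevf ω < k' ∧ P ω k') ∨ (k' = prevf ω + 1 ∧ ∀ i, prevf ω < i → ¬ P ω i)}} = _ from h]
  have hlt : ∀ j : ℕ, MeasurableSet {ω | prevf ω < j} :=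
    fun j => measurableSet_lt hprev measurable_const
  refine MeasurableSet.union (MeasurableSet.inter (hlt k) (hP k)) ?_
  refine MeasurableSet.inter ?_ ?_
  · rcases Nat.eq_zero_or_pos k with rfl | hk
    · have h0 : {ω | (0:ℕ) = prevf ω + 1} = ∅ := by ext ω; simp
      rw [h0]; exact MeasurableSet.empty
    · have h0 : {ω | k = prevf ω + 1} = prevf ⁻¹' {k - 1} := by
        ext ω; simp only [mem_preimage, mem_singleton_iff, mem_setOf_eq]; omega
      rw [h0]
      exact hprev (measurableSet_singleton _)
  · exact MeasurableSet.iInter fun i => ((hlt i).compl).union (hP i).compl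

/-- Measurable strictly monotone choice sequence: at step `j` it picks an index
satisfying `Q j` strictly beyond the previous one whenever possible. -/
noncomputable def chooseSeq (Q : ℕ → Ω → ℕ → Prop) (ω : Ω) : ℕ → ℕ
  | 0 => nextIdx (Q 0 ω) 0
  | j + 1 => nextIdx (Q (j + 1) ω) (chooseSeq Q ω j)

lemma chooseSeq_strictMono (Q : ℕ → Ω → ℕ → Prop) (ω : Ω) : StrictMono (chooseSeq Q ω) := by
  apply strictMono_nat_of_lt_succ
  intro n
  exact nextIdx_lt _ _

lemma chooseSeq_spec (Q : ℕ → Ω → ℕ → Prop) (ω : Ω) (j : ℕ)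
    (h : ∀ m', ∃ k, m' < k ∧ Q j ω k) : Q j ω (chooseSeq Q ω j) := by
  cases j with
  | zero => exact nextIdx_spec (h 0)
  | succ j => exact nextIdx_spec (h (chooseSeq Q ω j))

lemma chooseSeq_measurable {Q : ℕ → Ω → ℕ → Prop}
    (hQ : ∀ j k, MeasurableSet {ω | Q j ω k}) (j : ℕ) :
    Measurable fun ω => chooseSeq Q ω j := by
  induction j with
  | zero => exact measurable_nextIdx (hQ 0) measurable_const
  | succ j ih => exact measurable_nextIdx (hQ (j + 1)) ih

end AuxSel


section Euc

variable {d : ℕ}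

lemma euc_abs_coord_le (x : EuclideanSpace ℝ (Fin d)) (i : Fin d) : |x i| ≤ ‖x‖ := by
  rw [EuclideanSpace.norm_eq]
  calc |x i| = Real.sqrt (‖x i‖ ^ 2) := by
        rw [Real.sqrt_sq_eq_abs, Real.norm_eq_abs, abs_abs]
    _ ≤ Real.sqrt (∑ j, ‖x j‖ ^ 2) := by
        apply Real.sqrt_le_sqrt
        exact Finset.single_le_sum (f := fun j => ‖x j‖ ^ 2)
          (fun j _ => sq_nonneg _) (Finset.mem_univ i)

lemma euc_measurable_coord (i : Fin d) :
    Measurable fun x : EuclideanSpace ℝ (Fin d) => x i :=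
  (EuclideanSpace.proj (𝕜 := ℝ) i).continuous.measurable

lemma euc_sum_coord_smul (x : EuclideanSpace ℝ (Fin d)) :
    ∑ i, x i • (EuclideanSpace.basisFun (Fin d) ℝ) i = x := by
  simpa [EuclideanSpace.basisFun_repr] using
    (EuclideanSpace.basisFun (Fin d) ℝ).sum_repr x

end Euc

section AuxSel2
variable {Ω : Type*} {m : MeasurableSpace Ω}

/-- Measurable refinement along which a (pointwise bounded) real sequence converges to its liminf. -/
lemma exists_refine (g : ℕ → Ω → ℝ) (hg : ∀ k, Measurable (g k)) :
    ∃ ρ : Ω → ℕ → ℕ, (∀ j, Measurable fun ω => ρ ω j) ∧ (∀ ω, StrictMono (ρ ω)) ∧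
      ∀ ω, (∃ C, ∀ k, |g k ω| ≤ C) →
        Tendsto (fun j => g (ρ ω j) ω) atTop (𝓝 (liminf (fun k => g k ω) atTop)) := by
  set L : Ω → ℝ := fun ω => liminf (fun k => g k ω) atTop with hLdef
  have hLmeas : Measurable L := Measurable.liminf hg
  set Q : ℕ → Ω → ℕ → Prop := fun j ω k => g k ω < L ω + 1 / (j + 1) with hQdef
  have hQmeas : ∀ j k, MeasurableSet {ω | Q j ω k} := fun j k =>
    measurableSet_lt (hg k) (hLmeas.add measurable_const)
  refine ⟨chooseSeq Q, fun j => chooseSeq_measurable hQmeas j,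
    fun ω => chooseSeq_strictMono Q ω, ?_⟩
  rintro ω ⟨C, hC⟩
  have hbddle : IsBoundedUnder (· ≤ ·) atTop (fun k => g k ω) :=
    isBoundedUnder_of ⟨C, fun k => (abs_le.1 (hC k)).2⟩
  have hbddge : IsBoundedUnder (· ≥ ·) atTop (fun k => g k ω) :=
    isBoundedUnder_of ⟨-C, fun k => (abs_le.1 (hC k)).1⟩
  have hcof : ∀ j m', ∃ k, m' < k ∧ Q j ω k := by
    intro j m'
    have hpos : (0:ℝ) < 1 / (j + 1) := by positivity
    have hfr : ∃ᶠ k in atTop, g k ω < L ω + 1 / (j + 1) :=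
      frequently_lt_of_liminf_lt hbddle.isCoboundedUnder_ge (by simp [hLdef]; linarith)
    obtain ⟨k, hk1, hk2⟩ := (frequently_atTop.1 hfr) (m' + 1)
    exact ⟨k, by omega, hk2⟩
  have hQρ : ∀ j, g (chooseSeq Q ω j) ω < L ω + 1 / (j + 1) :=
    fun j => chooseSeq_spec Q ω j (hcof j)
  change Tendsto _ atTop (𝓝 (L ω))
  apply tendsto_order.2
  constructor
  · intro a ha
    have hev : ∀ᶠ k in atTop, a < g k ω := eventually_lt_of_lt_liminf ha hbddge
    obtain ⟨N, hN⟩ := eventually_atTop.1 hev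
    exact eventually_atTop.2 ⟨N, fun j hj =>
      hN _ (le_trans hj ((chooseSeq_strictMono Q ω).le_apply))⟩
  · intro a ha
    obtain ⟨J, hJ⟩ := exists_nat_one_div_lt (show (0:ℝ) < a - L ω by linarith)
    refine eventually_atTop.2 ⟨J, fun j hj => ?_⟩
    have h1 : (1:ℝ) / (j + 1) ≤ 1 / (J + 1) := by
      apply one_div_le_one_div_of_le (by positivity)
      exact_mod_cast by omega
    have := hQρ j
    push_cast at hJ h1 ⊢
    linarith

end AuxSel2

section AuxSel3
variable {Ω : Type*} {m : MeasurableSpace Ω} {d : ℕ}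

/-- Measurable selection of a convergent subsequence (Kabanov–Stricker style):
coordinatewise version. -/
lemma exists_selection (f : ℕ → Ω → EuclideanSpace ℝ (Fin d)) (hf : ∀ n, Measurable (f n)) :
    ∃ σ : Ω → ℕ → ℕ, (∀ k, Measurable fun ω => σ ω k) ∧ (∀ ω, StrictMono (σ ω)) ∧
      ∀ ω, (∃ C, ∀ n, ‖f n ω‖ ≤ C) → ∀ i : Fin d,
        ∃ l, Tendsto (fun k => f (σ ω k) ω i) atTop (𝓝 l) := by
  have key : ∀ s : Finset (Fin d),
      ∃ σ : Ω → ℕ → ℕ, (∀ k, Measurable fun ω => σ ω k) ∧ (∀ ω, StrictMono (σ ω)) ∧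
        ∀ ω, (∃ C, ∀ n, ‖f n ω‖ ≤ C) → ∀ i ∈ s,
          ∃ l, Tendsto (fun k => f (σ ω k) ω i) atTop (𝓝 l) := by
    intro s
    induction s using Finset.induction_on with
    | empty =>
      exact ⟨fun _ k => k, fun k => measurable_const, fun ω => strictMono_id,
        fun ω _ i hi => absurd hi (Finset.notMem_empty i)⟩
    | @insert i s hi ih =>
      obtain ⟨σ, hσm, hσmono, hσconv⟩ := ih
      set g : ℕ → Ω → ℝ := fun k ω => f (σ ω k) ω i with hgdef
      have hgm : ∀ k, Measurable (g k) := by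
        intro k
        exact measurable_apply_nat' (fun n => (euc_measurable_coord i).comp (hf n)) (hσm k)
      obtain ⟨ρ, hρm, hρmono, hρconv⟩ := exists_refine g hgm
      refine ⟨fun ω k => σ ω (ρ ω k), ?_, ?_, ?_⟩
      · intro k
        exact measurable_apply_nat' (f := fun n ω => σ ω n) (fun n => hσm n) (hρm k)
      · exact fun ω => (hσmono ω).comp (hρmono ω)
      · rintro ω hC i' hi'
        rcases Finset.mem_insert.1 hi' with rfl | hmem
        · refine ⟨liminf (fun k => g k ω) atTop, ?_⟩
          apply hρconv
          obtain ⟨C, hC⟩ := hC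
          exact ⟨C, fun k => le_trans (euc_abs_coord_le _ _) (hC _)⟩
        · obtain ⟨l, hl⟩ := hσconv ω hC i' hmem
          exact ⟨l, hl.comp ((hρmono ω).tendsto_atTop)⟩
  obtain ⟨σ, h1, h2, h3⟩ := key Finset.univ
  exact ⟨σ, h1, h2, fun ω hC i => h3 ω hC i (Finset.mem_univ i)⟩

/-- From coordinatewise convergence along a measurable selection, build the measurable limit. -/
lemma limit_of_selection (f : ℕ → Ω → EuclideanSpace ℝ (Fin d)) (hf : ∀ n, Measurable (f n))
    (σ : Ω → ℕ → ℕ) (hσm : ∀ k, Measurable fun ω => σ ω k) (A : Set Ω)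
    (hconv : ∀ ω ∈ A, ∀ i : Fin d, ∃ l, Tendsto (fun k => f (σ ω k) ω i) atTop (𝓝 l)) :
    ∃ G : Ω → EuclideanSpace ℝ (Fin d), Measurable G ∧
      ∀ ω ∈ A, Tendsto (fun k => f (σ ω k) ω) atTop (𝓝 (G ω)) := by
  set b := EuclideanSpace.basisFun (Fin d) ℝ with hbdef
  set c : Fin d → Ω → ℝ := fun i ω => liminf (fun k => f (σ ω k) ω i) atTop with hcdef
  have hcm : ∀ i, Measurable (c i) := fun i =>
    Measurable.liminf fun k =>
      measurable_apply_nat' (fun n => (euc_measurable_coord i).comp (hf n)) (hσm k)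
  refine ⟨fun ω => ∑ i, c i ω • b i, ?_, ?_⟩
  · exact Finset.measurable_sum _ fun i _ => (hcm i).smul_const (b i)
  · intro ω hω
    have h1 : ∀ i, Tendsto (fun k => f (σ ω k) ω i) atTop (𝓝 (c i ω)) := by
      intro i
      obtain ⟨l, hl⟩ := hconv ω hω i
      have : c i ω = l := hl.liminf_eq
      rw [this]; exact hl
    have h2 : Tendsto (fun k => ∑ i, (f (σ ω k) ω i) • b i) atTop
        (𝓝 (∑ i, c i ω • b i)) :=
      tendsto_finset_sum _ fun i _ => (h1 i).smul_const (b i)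
    have h3 : (fun k => f (σ ω k) ω) = fun k => ∑ i, (f (σ ω k) ω i) • b i :=
      funext fun k => (euc_sum_coord_smul _).symm
    rw [h3]
    exact h2

end AuxSel3



/-- **Convergence of canonical-form sequences (Lemma 3.2 (ii)).**
Fix `1 ≤ t ≤ T` and a dense subset `Γ` of `Θ`, and let `(H_n)` be a sequence of
`F_{t-1}`-measurable random vectors in canonical form.  Then `(H_n)` converges a.s. iff
for every `θ ∈ Γ` the sequence `(⟨H_n, ΔS^θ_t⟩)` converges a.s. -/
theorem canonical_converges_iff
    {Ω : Type*} [mΩ : MeasurableSpace Ω] (P : Measure Ω) [IsProbabilityMeasure P]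
    {X : Type*} [MetricSpace X] [TopologicalSpace.SeparableSpace X]
    (d T : ℕ) (hd : 1 ≤ d) (hT : 1 ≤ T)
    (𝓕 : ℕ → MeasurableSpace Ω) (h𝓕_mono : Monotone 𝓕) (h𝓕_le : ∀ t, 𝓕 t ≤ mΩ)
    (h𝓕_null : ∀ N : Set Ω, P N = 0 → MeasurableSet[𝓕 0] N)
    (Θ : Set X) (hΘ_closed : IsClosed Θ) (hΘ_ne : Θ.Nonempty)
    (S : X → ℕ → Ω → EuclideanSpace ℝ (Fin d))
    (hS_adapted : ∀ θ ∈ Θ, ∀ t ≤ T, StronglyMeasurable[𝓕 t] (S θ t))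
    (hS_cont : ∀ (θs : ℕ → X) (θ : X), (∀ n, θs n ∈ Θ) → θ ∈ Θ →
      Tendsto θs atTop (𝓝 θ) → ∃ φ : ℕ → ℕ, StrictMono φ ∧
        ∀ t ≤ T, ∀ᵐ ω ∂P, Tendsto (fun k => S (θs (φ k)) t ω) atTop (𝓝 (S θ t ω)))
    (t : ℕ) (ht1 : 1 ≤ t) (htT : t ≤ T)
    (Γ : Set X) (hΓ_sub : Γ ⊆ Θ) (hΓ_dense : Θ ⊆ closure Γ)
    (Proj : Ω → EuclideanSpace ℝ (Fin d) →L[ℝ] EuclideanSpace ℝ (Fin d))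
    (hProj_meas : ∀ x, Measurable[𝓕 (t - 1)] fun ω => Proj ω x)
    (hProj_idem : ∀ ω, (Proj ω).comp (Proj ω) = Proj ω)
    (hProj_selfadj : ∀ ω x y, ⟪Proj ω x, y⟫ = ⟪x, Proj ω y⟫)
    (hProj_char : ∀ h : Ω → EuclideanSpace ℝ (Fin d), StronglyMeasurable[𝓕 (t - 1)] h →
      ((∀ θ ∈ Θ, ∀ᵐ ω ∂P, ⟪h ω, S θ t ω - S θ (t - 1) ω⟫ = 0) ↔
        ∀ᵐ ω ∂P, Proj ω (h ω) = h ω))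
    (H : ℕ → Ω → EuclideanSpace ℝ (Fin d))
    (hH_meas : ∀ n, StronglyMeasurable[𝓕 (t - 1)] (H n))
    (hH_canon : ∀ n, ∀ᵐ ω ∂P, H n ω - Proj ω (H n ω) = H n ω) :
    (∀ᵐ ω ∂P, ∃ L : EuclideanSpace ℝ (Fin d),
        Tendsto (fun n => H n ω) atTop (𝓝 L)) ↔
      ∀ θ ∈ Γ, ∀ᵐ ω ∂P, ∃ l : ℝ,
        Tendsto (fun n => ⟪H n ω, S θ t ω - S θ (t - 1) ω⟫) atTop (𝓝 l) := by
  classical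
  constructor
  · intro hconv θ hθ
    filter_upwards [hconv] with ω hω
    obtain ⟨L, hL⟩ := hω
    exact ⟨⟪L, S θ t ω - S θ (t - 1) ω⟫, hL.inner tendsto_const_nhds⟩
  · intro hc
    have hHm : ∀ n, Measurable[𝓕 (t - 1)] (H n) := fun n => (hH_meas n).measurable
    -- countable dense subset of Γ
    obtain ⟨Γ₀, hΓ₀_sub, hΓ₀_count, hΓ₀_dense⟩ :
        ∃ Γ₀ : Set X, Γ₀ ⊆ Γ ∧ Γ₀.Countable ∧ Θ ⊆ closure Γ₀ := by
      have hsep : TopologicalSpace.IsSeparable Γ :=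
        TopologicalSpace.IsSeparable.of_separableSpace Γ
      haveI : TopologicalSpace.SeparableSpace ↥Γ := hsep.separableSpace
      obtain ⟨s, hsc, hsd⟩ := TopologicalSpace.exists_countable_dense ↥Γ
      refine ⟨Subtype.val '' s, by rintro x ⟨y, _, rfl⟩; exact y.2, hsc.image _, ?_⟩
      have h1 : Γ ⊆ closure (Subtype.val '' s) := by
        intro x hx
        have hmem : (⟨x, hx⟩ : ↥Γ) ∈ closure s := by rw [hsd.closure_eq]; trivial
        exact (image_closure_subset_closure_image continuous_subtype_val)
          ⟨⟨x, hx⟩, hmem, rfl⟩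
      exact fun θ hθ => closure_minimal h1 isClosed_closure (hΓ_dense hθ)
    -- the kill lemma
    have hkill : ∀ G : Ω → EuclideanSpace ℝ (Fin d), Measurable[𝓕 (t - 1)] G →
        (∀ᵐ ω ∂P, Proj ω (G ω) = 0) →
        (∀ θ ∈ Γ₀, ∀ᵐ ω ∂P, ⟪G ω, S θ t ω - S θ (t - 1) ω⟫ = 0) →
        ∀ᵐ ω ∂P, G ω = 0 := by
      intro G hGm hGproj hGinner
      have hGΘ : ∀ θ ∈ Θ, ∀ᵐ ω ∂P, ⟪G ω, S θ t ω - S θ (t - 1) ω⟫ = 0 := by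
        intro θ hθ
        obtain ⟨u, hu_mem, hu_tend⟩ := mem_closure_iff_seq_limit.1 (hΓ₀_dense hθ)
        obtain ⟨φ, hφ, hSconv⟩ :=
          hS_cont u θ (fun n => hΓ_sub (hΓ₀_sub (hu_mem n))) hθ hu_tend
        have h1 := hSconv t htT
        have h2 := hSconv (t - 1) (le_trans (Nat.sub_le t 1) htT)
        have h3 : ∀ᵐ ω ∂P, ∀ k : ℕ,
            ⟪G ω, S (u (φ k)) t ω - S (u (φ k)) (t - 1) ω⟫ = 0 :=
          ae_all_iff.2 fun k => hGinner _ (hu_mem (φ k))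
        filter_upwards [h1, h2, h3] with ω h1 h2 h3
        have htend : Tendsto (fun k => ⟪G ω, S (u (φ k)) t ω - S (u (φ k)) (t - 1) ω⟫)
            atTop (𝓝 ⟪G ω, S θ t ω - S θ (t - 1) ω⟫) :=
          Tendsto.inner tendsto_const_nhds (h1.sub h2)
        simp only [h3] at htend
        exact tendsto_nhds_unique htend tendsto_const_nhds
      have hfix := (hProj_char G hGm.stronglyMeasurable).1 hGΘ
      filter_upwards [hfix, hGproj] with ω h1 h2
      rw [← h1, h2]
    -- the good set
    have hscal : ∀ᵐ ω ∂P, ∀ θ ∈ Γ₀, ∃ l : ℝ,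
        Tendsto (fun n => ⟪H n ω, S θ t ω - S θ (t - 1) ω⟫) atTop (𝓝 l) :=
      (ae_ball_iff hΓ₀_count).2 fun θ hθ => hc θ (hΓ₀_sub hθ)
    have hP0 : ∀ᵐ ω ∂P, ∀ n, Proj ω (H n ω) = 0 :=
      ae_all_iff.2 fun n => (hH_canon n).mono fun ω h => sub_eq_self.mp h
    set Good : Set Ω := {ω | (∀ θ ∈ Γ₀, ∃ l : ℝ,
        Tendsto (fun n => ⟪H n ω, S θ t ω - S θ (t - 1) ω⟫) atTop (𝓝 l)) ∧
        ∀ n, Proj ω (H n ω) = 0} with hGooddef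
    have hGood_ae : ∀ᵐ ω ∂P, ω ∈ Good := by
      filter_upwards [hscal, hP0] with ω h1 h2
      exact ⟨h1, h2⟩
    have hGood_null : P Goodᶜ = 0 := by
      have h := hGood_ae
      rw [ae_iff] at h
      convert h using 2
      rfl
    have hGood_meas : MeasurableSet[𝓕 (t - 1)] Good := by
      have h0 : MeasurableSet[𝓕 0] Goodᶜ := h𝓕_null _ hGood_null
      have h1 : MeasurableSet[𝓕 (t - 1)] Goodᶜ := h𝓕_mono (Nat.zero_le (t - 1)) _ h0
      simpa using h1.compl
    -- Step A : a.s. boundedness of (H n ω)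
    set QA : ℕ → Ω → ℕ → Prop := fun j ω k => ((j : ℝ) + 1) ≤ ‖H k ω‖ with hQAdef
    have hQAm : ∀ j k, MeasurableSet[𝓕 (t - 1)] {ω | QA j ω k} := fun j k =>
      measurableSet_le measurable_const (continuous_norm.measurable.comp (hHm k))
    set ρA := chooseSeq QA with hρAdef
    have hρAm : ∀ j, Measurable[𝓕 (t - 1)] fun ω => ρA ω j := chooseSeq_measurable (m := 𝓕 (t - 1)) hQAm
    have hρAmono : ∀ ω, StrictMono (ρA ω) := chooseSeq_strictMono QA
    set Bset : Set Ω := {ω | ∀ C : ℕ, ∃ n, (C : ℝ) < ‖H n ω‖} with hBdef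
    have hBm : MeasurableSet[𝓕 (t - 1)] Bset := by
      have h : Bset = ⋂ C : ℕ, ⋃ n, {ω | (C : ℝ) < ‖H n ω‖} := by
        ext ω; simp [hBdef]
      rw [h]
      exact MeasurableSet.iInter fun C => MeasurableSet.iUnion fun n =>
        measurableSet_lt measurable_const (continuous_norm.measurable.comp (hHm n))
    have hcofA : ∀ ω ∈ Bset, ∀ j, QA j ω (ρA ω j) := by
      intro ω hω j
      apply chooseSeq_spec
      intro m'
      obtain ⟨C0, hC0⟩ : ∃ C0 : ℝ, ∀ k ≤ m', ‖H k ω‖ ≤ C0 :=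
        by
        refine ⟨(Finset.range (m' + 1)).sup' ⟨0, by simp⟩ fun k => ‖H k ω‖, ?_⟩
        intro k hk
        exact Finset.le_sup' (fun k => ‖H k ω‖) (Finset.mem_range.2 (Nat.lt_succ_of_le hk))
      obtain ⟨C, hC⟩ := exists_nat_ge (max C0 ((j : ℝ) + 1))
      obtain ⟨n, hn⟩ := hω C
      have hnm : m' < n := by
        by_contra hcon
        push_neg at hcon
        have h1 := hC0 n hcon
        have h2 := le_trans (le_max_left C0 _) hC
        linarith
      exact ⟨n, hnm, le_trans (le_trans (le_max_right C0 _) hC) (le_of_lt hn)⟩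
    set f1 : ℕ → Ω → EuclideanSpace ℝ (Fin d) :=
      fun k ω => (max ‖H (ρA ω k) ω‖ 1)⁻¹ • H (ρA ω k) ω with hf1def
    have hHρ : ∀ k, Measurable[𝓕 (t - 1)] fun ω => H (ρA ω k) ω :=
      fun k => measurable_apply_nat' (m := 𝓕 (t - 1)) hHm (hρAm k)
    have hf1m : ∀ k, Measurable[𝓕 (t - 1)] (f1 k) := fun k =>
      ((((continuous_norm.measurable.comp (hHρ k))).max measurable_const).inv).smul (hHρ k)
    have hmaxpos : ∀ k ω, (0 : ℝ) < max ‖H (ρA ω k) ω‖ 1 :=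
      fun k ω => lt_of_lt_of_le one_pos (le_max_right _ _)
    have hf1bdd : ∀ ω, ∃ C, ∀ k, ‖f1 k ω‖ ≤ C := by
      intro ω
      refine ⟨1, fun k => ?_⟩
      have h1 := hmaxpos k ω
      have h2 : ‖H (ρA ω k) ω‖ ≤ max ‖H (ρA ω k) ω‖ 1 := le_max_left _ _
      calc ‖f1 k ω‖ = (max ‖H (ρA ω k) ω‖ 1)⁻¹ * ‖H (ρA ω k) ω‖ := by
            rw [hf1def]
            simp only [norm_smul, norm_inv, Real.norm_eq_abs, abs_of_pos h1]
        _ ≤ (max ‖H (ρA ω k) ω‖ 1)⁻¹ * max ‖H (ρA ω k) ω‖ 1 :=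
            mul_le_mul_of_nonneg_left h2 (inv_nonneg.2 h1.le)
        _ = 1 := inv_mul_cancel₀ (ne_of_gt h1)
    obtain ⟨σA, hσAm, hσAmono, hσAconv⟩ := exists_selection (m := 𝓕 (t - 1)) f1 hf1m
    obtain ⟨GA, hGAm, hGAt⟩ := limit_of_selection (m := 𝓕 (t - 1)) f1 hf1m σA hσAm univ
      (fun ω _ => hσAconv ω (hf1bdd ω))
    have hf1norm1 : ∀ ω ∈ Bset, ∀ k, ‖f1 k ω‖ = 1 := by
      intro ω hω k
      have hlow : ((k : ℝ) + 1) ≤ ‖H (ρA ω k) ω‖ := hcofA ω hω k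
      have h1 : (1 : ℝ) ≤ ‖H (ρA ω k) ω‖ := by
        have : (0:ℝ) ≤ (k : ℝ) := Nat.cast_nonneg k
        linarith
      have hpos : (0 : ℝ) < ‖H (ρA ω k) ω‖ := lt_of_lt_of_le one_pos h1
      rw [hf1def]
      simp only [norm_smul, norm_inv, Real.norm_eq_abs, max_eq_left h1,
        abs_of_pos hpos]
      exact inv_mul_cancel₀ (ne_of_gt hpos)
    have hGAnorm : ∀ ω ∈ Bset, ‖GA ω‖ = 1 := by
      intro ω hω
      have h1 : Tendsto (fun k => ‖f1 (σA ω k) ω‖) atTop (𝓝 ‖GA ω‖) :=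
        (hGAt ω trivial).norm
      have h2 : (fun k => ‖f1 (σA ω k) ω‖) = fun _ => (1 : ℝ) :=
        funext fun k => hf1norm1 ω hω _
      rw [h2] at h1
      exact tendsto_nhds_unique h1 tendsto_const_nhds
    have hGAproj : ∀ ω ∈ Good, Proj ω (GA ω) = 0 := by
      intro ω hω
      have h1 : ∀ k, Proj ω (f1 k ω) = 0 := by
        intro k
        rw [hf1def]
        simp only [_root_.map_smul, hω.2 (ρA ω k), smul_zero]
      have h2 : Tendsto (fun k => Proj ω (f1 (σA ω k) ω)) atTop (𝓝 (Proj ω (GA ω))) :=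
        ((Proj ω).continuous.tendsto _).comp (hGAt ω trivial)
      have h3 : (fun k => Proj ω (f1 (σA ω k) ω)) = fun _ => (0 : EuclideanSpace ℝ (Fin d)) :=
        funext fun k => h1 _
      rw [h3] at h2
      exact tendsto_nhds_unique h2 tendsto_const_nhds
    have hGAinner : ∀ θ ∈ Γ₀, ∀ ω, ω ∈ Bset → ω ∈ Good →
        ⟪GA ω, S θ t ω - S θ (t - 1) ω⟫ = 0 := by
      intro θ hθ ω hB hG
      obtain ⟨l, hl⟩ := hG.1 θ hθ
      have hmono : StrictMono (fun k => ρA ω (σA ω k)) :=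
        (hρAmono ω).comp (hσAmono ω)
      have hnum : Tendsto (fun k => ⟪H (ρA ω (σA ω k)) ω, S θ t ω - S θ (t - 1) ω⟫)
          atTop (𝓝 l) := hl.comp hmono.tendsto_atTop
      have hden : Tendsto (fun k => (max ‖H (ρA ω (σA ω k)) ω‖ 1)⁻¹) atTop (𝓝 0) := by
        refine squeeze_zero (g := fun k : ℕ => ((k : ℝ) + 1)⁻¹)
          (fun k : ℕ => (inv_nonneg.2 (hmaxpos _ ω).le)) ?_ ?_
        · intro k
          apply inv_anti₀ (by positivity)
          have h1 : ((σA ω k : ℝ) + 1) ≤ ‖H (ρA ω (σA ω k)) ω‖ := hcofA ω hB _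
          have h2 : (k : ℝ) ≤ (σA ω k : ℝ) := by
            exact_mod_cast (hσAmono ω).le_apply
          exact le_trans (by linarith) (le_trans h1 (le_max_left _ _))
        · simpa [one_div] using tendsto_one_div_add_atTop_nhds_zero_nat (𝕜 := ℝ)
      have hprod : Tendsto (fun k => ⟪f1 (σA ω k) ω, S θ t ω - S θ (t - 1) ω⟫)
          atTop (𝓝 0) := by
        have h1 : (fun k => ⟪f1 (σA ω k) ω, S θ t ω - S θ (t - 1) ω⟫) =
            fun k => (max ‖H (ρA ω (σA ω k)) ω‖ 1)⁻¹ *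
              ⟪H (ρA ω (σA ω k)) ω, S θ t ω - S θ (t - 1) ω⟫ := by
          funext k
          rw [hf1def]
          exact real_inner_smul_left _ _ _
        rw [h1]
        simpa using hden.mul hnum
      have h2 : Tendsto (fun k => ⟪f1 (σA ω k) ω, S θ t ω - S θ (t - 1) ω⟫)
          atTop (𝓝 ⟪GA ω, S θ t ω - S θ (t - 1) ω⟫) :=
        Tendsto.inner (hGAt ω trivial) tendsto_const_nhds
      exact tendsto_nhds_unique h2 hprod
    set DA : Set Ω := Bset ∩ Good with hDAdef
    have hDAm : MeasurableSet[𝓕 (t - 1)] DA := hBm.inter hGood_meas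
    have hA0 : ∀ᵐ ω ∂P, DA.indicator GA ω = 0 := by
      apply hkill
      · exact hGAm.indicator hDAm
      · apply ae_of_all
        intro ω
        by_cases hω : ω ∈ DA
        · rw [indicator_of_mem hω]
          exact hGAproj ω hω.2
        · rw [indicator_of_notMem hω, map_zero]
      · intro θ hθ
        apply ae_of_all
        intro ω
        by_cases hω : ω ∈ DA
        · rw [indicator_of_mem hω]
          exact hGAinner θ hθ ω hω.1 hω.2
        · rw [indicator_of_notMem hω, inner_zero_left]
    have hBnot : ∀ᵐ ω ∂P, ω ∉ Bset := by
      filter_upwards [hA0, hGood_ae] with ω h0 hg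
      intro hB
      have hmem : ω ∈ DA := ⟨hB, hg⟩
      rw [indicator_of_mem hmem] at h0
      have := hGAnorm ω hB
      rw [h0] at this
      simp at this
    -- Step B : convergence
    obtain ⟨σ1, hσ1m, hσ1mono, hσ1conv⟩ := exists_selection (m := 𝓕 (t - 1)) H hHm
    set Abd : Set Ω := {ω | ∃ C : ℕ, ∀ n, ‖H n ω‖ ≤ (C : ℝ)} with hAbddef
    obtain ⟨G, hGm, hGt⟩ := limit_of_selection (m := 𝓕 (t - 1)) H hHm σ1 hσ1m Abd
      (fun ω hω => hσ1conv ω (by obtain ⟨C, hC⟩ := hω; exact ⟨C, hC⟩))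
    set R : Ω → ℝ := fun ω => limsup (fun n => min ‖H n ω - G ω‖ 1) atTop with hRdef
    have hRm : Measurable[𝓕 (t - 1)] R :=
      Measurable.limsup fun n => ((continuous_norm.measurable.comp ((hHm n).sub hGm)).min measurable_const)
    set QB : ℕ → Ω → ℕ → Prop := fun _ ω k => R ω / 2 < min ‖H k ω - G ω‖ 1 with hQBdef
    have hQBm : ∀ j k, MeasurableSet[𝓕 (t - 1)] {ω | QB j ω k} := fun j k =>
      measurableSet_lt (hRm.div_const 2) ((continuous_norm.measurable.comp ((hHm k).sub hGm)).min measurable_const)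
    set τ := chooseSeq QB with hτdef
    have hτm : ∀ j, Measurable[𝓕 (t - 1)] fun ω => τ ω j := chooseSeq_measurable (m := 𝓕 (t - 1)) hQBm
    have hτmono : ∀ ω, StrictMono (τ ω) := chooseSeq_strictMono QB
    have hminnonneg : ∀ (v : EuclideanSpace ℝ (Fin d)), (0:ℝ) ≤ min ‖v‖ 1 :=
      fun v => le_min (norm_nonneg _) zero_le_one
    have hcofB : ∀ ω, 0 < R ω → ∀ j, QB j ω (τ ω j) := by
      intro ω hR j
      apply chooseSeq_spec
      intro m'
      have hcb : IsCoboundedUnder (· ≤ ·) atTop (fun n => min ‖H n ω - G ω‖ 1) :=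
        (isBoundedUnder_of ⟨0, fun n => hminnonneg _⟩ :
          IsBoundedUnder (· ≥ ·) atTop _).isCoboundedUnder_le
      have hfr : ∃ᶠ k in atTop, R ω / 2 < min ‖H k ω - G ω‖ 1 :=
        frequently_lt_of_lt_limsup hcb (by rw [hRdef]; linarith)
      obtain ⟨k, hk1, hk2⟩ := (frequently_atTop.1 hfr) (m' + 1)
      exact ⟨k, by omega, hk2⟩
    set HB : ℕ → Ω → EuclideanSpace ℝ (Fin d) := fun k ω => H (τ ω k) ω with hHBdef
    have hHBm : ∀ k, Measurable[𝓕 (t - 1)] (HB k) :=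
      fun k => measurable_apply_nat' (m := 𝓕 (t - 1)) hHm (hτm k)
    obtain ⟨σ2, hσ2m, hσ2mono, hσ2conv⟩ := exists_selection (m := 𝓕 (t - 1)) HB hHBm
    obtain ⟨G', hG'm, hG't⟩ := limit_of_selection (m := 𝓕 (t - 1)) HB hHBm σ2 hσ2m Abd
      (fun ω hω => hσ2conv ω (by obtain ⟨C, hC⟩ := hω; exact ⟨C, fun k => hC _⟩))
    -- limits of inner products along both selections agree
    have hGinner : ∀ θ ∈ Γ₀, ∀ ω, ω ∈ Abd → ω ∈ Good →
        ⟪G' ω - G ω, S θ t ω - S θ (t - 1) ω⟫ = 0 := by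
      intro θ hθ ω hA hG
      obtain ⟨l, hl⟩ := hG.1 θ hθ
      have e1 : ⟪G ω, S θ t ω - S θ (t - 1) ω⟫ = l := by
        have h2 : Tendsto (fun k => ⟪H (σ1 ω k) ω, S θ t ω - S θ (t - 1) ω⟫)
            atTop (𝓝 ⟪G ω, S θ t ω - S θ (t - 1) ω⟫) :=
          Tendsto.inner (hGt ω hA) tendsto_const_nhds
        exact tendsto_nhds_unique h2 (hl.comp (hσ1mono ω).tendsto_atTop)
      have e2 : ⟪G' ω, S θ t ω - S θ (t - 1) ω⟫ = l := by
        have h2 : Tendsto (fun k => ⟪H (τ ω (σ2 ω k)) ω, S θ t ω - S θ (t - 1) ω⟫)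
            atTop (𝓝 ⟪G' ω, S θ t ω - S θ (t - 1) ω⟫) :=
          Tendsto.inner (hG't ω hA) tendsto_const_nhds
        have hmono : StrictMono fun k => τ ω (σ2 ω k) := (hτmono ω).comp (hσ2mono ω)
        exact tendsto_nhds_unique h2 (hl.comp hmono.tendsto_atTop)
      rw [inner_sub_left, e1, e2, sub_self]
    have hGproj : ∀ ω ∈ Good, ω ∈ Abd → Proj ω (G' ω - G ω) = 0 := by
      intro ω hG hA
      have p1 : Proj ω (G ω) = 0 := by
        have h2 : Tendsto (fun k => Proj ω (H (σ1 ω k) ω)) atTop (𝓝 (Proj ω (G ω))) :=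
          ((Proj ω).continuous.tendsto _).comp (hGt ω hA)
        have h3 : (fun k => Proj ω (H (σ1 ω k) ω)) = fun _ => (0 : EuclideanSpace ℝ (Fin d)) :=
          funext fun k => hG.2 _
        rw [h3] at h2
        exact tendsto_nhds_unique h2 tendsto_const_nhds
      have p2 : Proj ω (G' ω) = 0 := by
        have h2 : Tendsto (fun k => Proj ω (H (τ ω (σ2 ω k)) ω)) atTop
            (𝓝 (Proj ω (G' ω))) :=
          ((Proj ω).continuous.tendsto _).comp (hG't ω hA)
        have h3 : (fun k => Proj ω (H (τ ω (σ2 ω k)) ω)) =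
            fun _ => (0 : EuclideanSpace ℝ (Fin d)) := funext fun k => hG.2 _
        rw [h3] at h2
        exact tendsto_nhds_unique h2 tendsto_const_nhds
      rw [map_sub, p1, p2, sub_zero]
    set DB : Set Ω := (Abd ∩ Good) ∩ {ω | 0 < R ω} with hDBdef
    have hAbdm : MeasurableSet[𝓕 (t - 1)] Abd := by
      have h : Abd = ⋃ C : ℕ, ⋂ n, {ω | ‖H n ω‖ ≤ (C : ℝ)} := by
        ext ω; simp [hAbddef]
      rw [h]
      exact MeasurableSet.iUnion fun C => MeasurableSet.iInter fun n =>
        measurableSet_le (continuous_norm.measurable.comp (hHm n)) measurable_const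
    have hDBm : MeasurableSet[𝓕 (t - 1)] DB :=
      (hAbdm.inter hGood_meas).inter (measurableSet_lt measurable_const hRm)
    have hsepB : ∀ ω ∈ DB, R ω / 2 ≤ ‖G' ω - G ω‖ := by
      rintro ω ⟨⟨hA, hG⟩, hR⟩
      have h1 : Tendsto (fun k => ‖H (τ ω (σ2 ω k)) ω - G ω‖) atTop
          (𝓝 ‖G' ω - G ω‖) := ((hG't ω hA).sub tendsto_const_nhds).norm
      apply ge_of_tendsto h1
      apply Eventually.of_forall
      intro k
      have h2 := hcofB ω hR (σ2 ω k)
      have h3 : min ‖H (τ ω (σ2 ω k)) ω - G ω‖ 1 ≤ ‖H (τ ω (σ2 ω k)) ω - G ω‖ :=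
        min_le_left _ _
      linarith
    have hB20 : ∀ᵐ ω ∂P, DB.indicator (fun ω => G' ω - G ω) ω = 0 := by
      apply hkill
      · exact (hG'm.sub hGm).indicator hDBm
      · apply ae_of_all
        intro ω
        by_cases hω : ω ∈ DB
        · rw [indicator_of_mem hω]
          exact hGproj ω hω.1.2 hω.1.1
        · rw [indicator_of_notMem hω, map_zero]
      · intro θ hθ
        apply ae_of_all
        intro ω
        by_cases hω : ω ∈ DB
        · rw [indicator_of_mem hω]
          exact hGinner θ hθ ω hω.1.1 hω.1.2
        · rw [indicator_of_notMem hω, inner_zero_left]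
    -- conclusion
    filter_upwards [hB20, hGood_ae, hBnot] with ω h0 hg hb
    have hA : ω ∈ Abd := by
      have hb' : ¬ ∀ C : ℕ, ∃ n, (C : ℝ) < ‖H n ω‖ := hb
      push_neg at hb'
      obtain ⟨C, hC⟩ := hb'
      exact ⟨C, hC⟩
    have hR0 : R ω ≤ 0 := by
      by_contra hcon
      push_neg at hcon
      have hmem : ω ∈ DB := ⟨⟨hA, hg⟩, hcon⟩
      rw [indicator_of_mem hmem] at h0
      have := hsepB ω hmem
      rw [h0] at this
      simp at this
      linarith
    refine ⟨G ω, ?_⟩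
    have hminlim : Tendsto (fun n => min ‖H n ω - G ω‖ 1) atTop (𝓝 0) := by
      apply tendsto_of_le_liminf_of_limsup_le
      · apply le_liminf_of_le
        · exact (isBoundedUnder_of ⟨1, fun n => min_le_right _ _⟩ :
            IsBoundedUnder (· ≤ ·) atTop _).isCoboundedUnder_ge
        · exact Eventually.of_forall fun n => hminnonneg _
      · exact hR0
      · exact isBoundedUnder_of ⟨1, fun n => min_le_right _ _⟩
      · exact isBoundedUnder_of ⟨0, fun n => hminnonneg _⟩
    rw [tendsto_iff_norm_sub_tendsto_zero]
    rw [NormedAddCommGroup.tendsto_nhds_zero]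
    intro ε hε
    have hev : ∀ᶠ n in atTop, min ‖H n ω - G ω‖ 1 < min ε 1 :=
      hminlim.eventually (gt_mem_nhds (lt_min hε one_pos))
    filter_upwards [hev] with n hn
    rw [Real.norm_eq_abs, abs_of_nonneg (norm_nonneg _)]
    by_contra hcon
    push_neg at hcon
    have : min ε 1 ≤ min ‖H n ω - G ω‖ 1 := min_le_min hcon le_rfl
    linarith
end

section
/- Let 0 < σ₁ < σ₂ and define f(1) := 1 + σ₂ and f(−1) := 1 − σ₁. Then: (a) the minimal x ∈ ℝ for which there exists H ∈ ℝ with x + H σ_i ω ≥ f(ω) for all ω ∈ {−1, 1} and i = 1, 2 equals 1 + σ₂ − σ₁, and it is attained with H = 1; (b) for each single model i ∈ {1, 2}, the minimal x ∈ ℝ for which there exists H ∈ ℝ with x + H σ_i ω ≥ f(ω) for all ω ∈ {−1, 1} equals 1 + (σ₂ − σ₁)/2, attained with H = (σ₁ + σ₂)/(2σ_i); (c) there is no H ∈ ℝ satisfying 1 + (σ₂ − σ₁)/2 + H σ_i ω ≥ f(ω) for all ω ∈ {−1, 1} and i = 1, 2; in particular the worst-case superhedging price 1 + (σ₂ − σ₁)/2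 is strictly smaller than the robust superhedging price 1 + σ₂ − σ₁. -/
/-- **Worst-case superhedging prices are not enough.**
In the one-period toy model with zero drifts and volatilities `0 < σ₁ < σ₂`, for the claim
`f(1) = 1 + σ₂`, `f(-1) = 1 - σ₁`:
(a) the robust superhedging price over both models is `1 + σ₂ - σ₁`, attained by `H = 1`;
(b) for each single model `i` the superhedging price is `1 + (σ₂ - σ₁)/2`, attained by
`H = (σ₁ + σ₂)/(2σᵢ)`;
(c) no strategy superhedges the claim in both models starting from the worst-case price
`1 + (σ₂ - σ₁)/2`, which is strictly smaller than the robust price `1 + σ₂ - σ₁`. -/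
theorem toy_model_worst_case_price_not_enough
    (σ₁ σ₂ : ℝ) (h0 : 0 < σ₁) (h12 : σ₁ < σ₂) :
    (IsLeast {x : ℝ | ∃ H : ℝ,
        1 + σ₂ ≤ x + H * σ₁ ∧ 1 - σ₁ ≤ x - H * σ₁ ∧
        1 + σ₂ ≤ x + H * σ₂ ∧ 1 - σ₁ ≤ x - H * σ₂} (1 + σ₂ - σ₁) ∧
      (1 + σ₂ ≤ (1 + σ₂ - σ₁) + 1 * σ₁ ∧ 1 - σ₁ ≤ (1 + σ₂ - σ₁) - 1 * σ₁ ∧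
       1 + σ₂ ≤ (1 + σ₂ - σ₁) + 1 * σ₂ ∧ 1 - σ₁ ≤ (1 + σ₂ - σ₁) - 1 * σ₂)) ∧
    (∀ σ : ℝ, σ = σ₁ ∨ σ = σ₂ →
      IsLeast {x : ℝ | ∃ H : ℝ, 1 + σ₂ ≤ x + H * σ ∧ 1 - σ₁ ≤ x - H * σ}
        (1 + (σ₂ - σ₁) / 2) ∧
      (1 + σ₂ ≤ (1 + (σ₂ - σ₁) / 2) + (σ₁ + σ₂) / (2 * σ) * σ ∧
       1 - σ₁ ≤ (1 + (σ₂ - σ₁) / 2) - (σ₁ + σ₂) / (2 * σ) * σ)) ∧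
    (¬ ∃ H : ℝ,
        1 + σ₂ ≤ (1 + (σ₂ - σ₁) / 2) + H * σ₁ ∧
        1 - σ₁ ≤ (1 + (σ₂ - σ₁) / 2) - H * σ₁ ∧
        1 + σ₂ ≤ (1 + (σ₂ - σ₁) / 2) + H * σ₂ ∧
        1 - σ₁ ≤ (1 + (σ₂ - σ₁) / 2) - H * σ₂) ∧
    1 + (σ₂ - σ₁) / 2 < 1 + σ₂ - σ₁ := by
  have hσ2 : 0 < σ₂ := h0.trans h12
  refine ⟨⟨⟨⟨1, by linarith, by linarith, by linarith, by linarith⟩, ?_⟩, by linarith, by linarith, by linarith, by linarith⟩, ?_, ?_, by linarith⟩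
  · rintro x ⟨H, h1, h2, h3, h4⟩
    nlinarith [mul_pos h0 (sub_pos.mpr h12), sq_nonneg (H - 1), sq_nonneg (σ₂ - σ₁)]
  · rintro σ hσ
    have hσpos : 0 < σ := by rcases hσ with rfl | rfl; exact h0; exact hσ2
    have hmul : (σ₁ + σ₂) / (2 * σ) * σ = (σ₁ + σ₂) / 2 := by
      field_simp
    refine ⟨⟨⟨(σ₁ + σ₂) / (2 * σ), by rw [hmul]; linarith, by rw [hmul]; linarith⟩, ?_⟩,
      by rw [hmul]; linarith, by rw [hmul]; linarith⟩
    rintro x ⟨H, h1, h2⟩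
    linarith
  · rintro ⟨H, h1, h2, h3, h4⟩
    have hH : 0 < H := by nlinarith
    nlinarith [mul_pos hH (sub_pos.mpr h12)]
end
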